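/- arXiv:2302.12363 — 7 statements merged into one kernel-verified Lean document; each statement's English description precedes it below -/
import Mathlib

section
/- Let κ ∈ (0,1] and let (a_n)_{n≥0}, (b_n)_{n≥0} be sequences of nonnegative real numbers with b_0 = 0 such that for all n ≥ 1: b_n ≤ (1/4)·a_{n−1} + (1−κ)·b_{n−1} and a_n ≥ (1/2)·a_{n−1} + κ·b_{n−1}. Then b_n ≤ a_0^*·a_n for all n ≥ 0, where a_0^* = (2+κ)/(2κ). -/
/-- Corollary 2.5: if `b₀ = 0`, `b_n ≤ (1/4)a_{n-1} + (1-κ)b_{n-1}` and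
`a_n ≥ (1/2)a_{n-1} + κ b_{n-1}` for all `n ≥ 1`, then
`b_n ≤ ((2+κ)/(2κ)) a_n` for all `n ≥ 0`. -/
theorem stmt1 (κ : ℝ) (hκ0 : 0 < κ) (hκ1 : κ ≤ 1)
    (a b : ℕ → ℝ) (ha : ∀ n, 0 ≤ a n) (hb : ∀ n, 0 ≤ b n) (hb0 : b 0 = 0)
    (hrec1 : ∀ n : ℕ, b (n + 1) ≤ (1 / 4) * a n + (1 - κ) * b n)
    (hrec2 : ∀ n : ℕ, a (n + 1) ≥ (1 / 2) * a n + κ * b n) :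
    ∀ n : ℕ, b n ≤ ((2 + κ) / (2 * κ)) * a n := by
  intro n
  cases n with
  | zero =>
    rw [hb0]
    exact mul_nonneg (by positivity) (ha 0)
  | succ m =>
    have h1 := hrec1 m
    have h2 := hrec2 m
    have hC : (2 + κ) / (2 * κ) = (2 + κ) / (2 * κ) := rfl
    have key : b (m + 1) ≤ ((2 + κ) / (2 * κ)) * ((1 / 2) * a m + κ * b m) := by
      rw [div_mul_eq_mul_div, le_div_iff₀ (by positivity)]
      nlinarith [mul_le_mul_of_nonneg_right h1 (by positivity : (0:ℝ) ≤ 2*κ), mul_nonneg (mul_nonneg hκ0.le hκ0.le) (hb m), ha m]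
    calc b (m + 1) ≤ ((2 + κ) / (2 * κ)) * ((1 / 2) * a m + κ * b m) := key
      _ ≤ ((2 + κ) / (2 * κ)) * a (m + 1) := by
          apply mul_le_mul_of_nonneg_left h2 (by positivity)
end

section
/- Let (X, μ) be a finite measure space and let R : X → ℕ ∪ {∞} be measurable. Suppose there exist d₂ ≥ 1 and N ∈ ℕ such that μ({R ≥ n}) ≤ d₂ · Σ_{i=0}^{N} μ({R = n+i}) for all integers n ≥ 1. Then there exist C > 0 and γ ∈ (0,1) such that μ({R > n}) ≤ C·γ^n for all n ≥ 0. -/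
open MeasureTheory

/-- Corollary 2.8: if `μ(R ≥ n)` is dominated, uniformly in `n ≥ 1`, by a fixed
multiple of `μ(n ≤ R ≤ n + N)`, then `R` has exponential tails. -/
theorem stmt2 {X : Type*} [MeasurableSpace X] (μ : Measure X) [IsFiniteMeasure μ]
    (R : X → ℕ∞) (hR : Measurable R)
    (d₂ : ℝ) (hd₂ : 1 ≤ d₂) (N : ℕ)
    (hyp : ∀ n : ℕ, 1 ≤ n →
      μ {x | (n : ℕ∞) ≤ R x} ≤
        ENNReal.ofReal d₂ * ∑ i ∈ Finset.range (N + 1), μ {x | R x = ((n + i : ℕ) : ℕ∞)}) :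
    ∃ C > (0 : ℝ), ∃ γ ∈ Set.Ioo (0 : ℝ) 1, ∀ n : ℕ,
      μ {x | (n : ℕ∞) < R x} ≤ ENNReal.ofReal (C * γ ^ n) := by
  have hd₂0 : (0:ℝ) < d₂ := lt_of_lt_of_le one_pos hd₂
  set θ : ℝ := 1 - 1/(2*d₂) with hθdef
  have hinv : 0 < 1/(2*d₂) := by positivity
  have hinv1 : 1/(2*d₂) < 1 := by rw [div_lt_one (by linarith)]; linarith
  have hθ0 : 0 < θ := by simp only [hθdef]; linarith
  have hθ1 : θ < 1 := by simp only [hθdef]; linarith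
  -- tail function
  set t : ℕ → ℝ := fun n => (μ {x | (n : ℕ∞) ≤ R x}).toReal with ht
  have htnonneg : ∀ n, 0 ≤ t n := fun n => ENNReal.toReal_nonneg
  have htmono : ∀ {m n : ℕ}, m ≤ n → t n ≤ t m := by
    intro m n hmn
    apply ENNReal.toReal_le_toReal (measure_ne_top μ _) (measure_ne_top μ _) |>.mpr
    apply measure_mono
    intro x hx
    exact le_trans (by exact_mod_cast hmn : (m : ℕ∞) ≤ (n : ℕ∞)) hx
  -- key contraction
  have key : ∀ n : ℕ, 1 ≤ n → t (n + (N+1)) ≤ θ * t n := by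
    intro n hn
    set E : ℕ → Set X := fun i => {x | R x = ((n + i : ℕ) : ℕ∞)} with hE
    have hmeasE : ∀ i, MeasurableSet (E i) := fun i => hR (measurableSet_singleton _)
    have hmeasB : MeasurableSet {x | ((n + (N+1) : ℕ) : ℕ∞) ≤ R x} :=
      hR ((Set.to_countable (Set.Ici ((n + (N+1) : ℕ) : ℕ∞))).measurableSet)
    have hsplit : {x | ((n : ℕ) : ℕ∞) ≤ R x}
        = (⋃ i ∈ Finset.range (N+1), E i) ∪ {x | ((n + (N+1) : ℕ) : ℕ∞) ≤ R x} := by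
      ext x
      simp only [Set.mem_setOf_eq, Set.mem_union, Set.mem_iUnion, Finset.mem_range, hE]
      constructor
      · intro h
        cases hr : R x with
        | top => exact Or.inr (by simp)
        | coe m =>
          rw [hr] at h
          rw [Nat.cast_le] at h
          by_cases hm : m ≤ n + N
          · exact Or.inl ⟨m - n, by omega, by exact_mod_cast (by omega : m = n + (m-n))⟩
          · exact Or.inr (by exact_mod_cast (by omega : n + (N+1) ≤ m))
      · rintro (⟨i, hi, hxi⟩ | h)
        · rw [hxi]; exact_mod_cast (by omega : n ≤ n + i)
        · exact le_trans (by exact_mod_cast (by omega : n ≤ n + (N+1))) h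
    have hdisjU : Disjoint (⋃ i ∈ Finset.range (N+1), E i)
        {x | ((n + (N+1) : ℕ) : ℕ∞) ≤ R x} := by
      rw [Set.disjoint_left]
      rintro x hx hx2
      simp only [Set.mem_iUnion, Finset.mem_range, hE, Set.mem_setOf_eq] at hx hx2
      obtain ⟨i, hi, hxi⟩ := hx
      rw [hxi, Nat.cast_le] at hx2
      omega
    have hpd : (↑(Finset.range (N+1)) : Set ℕ).PairwiseDisjoint E := by
      intro i _ j _ hij
      simp only [Function.onFun, hE, Set.disjoint_left, Set.mem_setOf_eq]
      intro x hx hx2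
      rw [hx, Nat.cast_inj] at hx2
      exact hij (by omega)
    have hmeas : μ {x | ((n : ℕ) : ℕ∞) ≤ R x}
        = (∑ i ∈ Finset.range (N+1), μ (E i)) + μ {x | ((n + (N+1) : ℕ) : ℕ∞) ≤ R x} := by
      rw [hsplit, measure_union hdisjU hmeasB,
        measure_biUnion_finset hpd (fun i _ => hmeasE i)]
    have hsum_ne : (∑ i ∈ Finset.range (N+1), μ (E i)) ≠ ⊤ := by
      refine (ENNReal.sum_lt_top.mpr ?_).ne
      intro i _
      exact measure_lt_top μ _
    set s : ℝ := (∑ i ∈ Finset.range (N+1), μ (E i)).toReal with hs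
    have hs0 : 0 ≤ s := ENNReal.toReal_nonneg
    have hab : t n = s + t (n + (N+1)) := by
      simp only [ht, hs]
      rw [hmeas, ENNReal.toReal_add hsum_ne (measure_ne_top μ _)]
    have hds : t n ≤ d₂ * s := by
      have h := hyp n hn
      have h2 : (μ {x | ((n : ℕ) : ℕ∞) ≤ R x}).toReal
          ≤ (ENNReal.ofReal d₂ * ∑ i ∈ Finset.range (N+1), μ (E i)).toReal := by
        apply ENNReal.toReal_le_toReal (measure_ne_top μ _)
          (ENNReal.mul_ne_top ENNReal.ofReal_ne_top hsum_ne) |>.mpr h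
      rwa [ENNReal.toReal_mul, ENNReal.toReal_ofReal hd₂0.le] at h2
    have hud : (1/(2*d₂)) * d₂ = 1/2 := by field_simp
    have hs2 : 1/(2*d₂) * t n ≤ s := by
      have h1 := mul_le_mul_of_nonneg_left hds hinv.le
      rw [← mul_assoc, hud] at h1
      linarith
    simp only [hθdef]
    nlinarith [htnonneg n, htnonneg (n + (N+1))]
  -- iterate
  set M : ℝ := (μ Set.univ).toReal with hM
  have hM0 : 0 ≤ M := ENNReal.toReal_nonneg
  have iter : ∀ k : ℕ, t (1 + (N+1)*k) ≤ θ^k * M := by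
    intro k
    induction k with
    | zero =>
      simp only [Nat.mul_zero, pow_zero, one_mul]
      exact ENNReal.toReal_le_toReal (measure_ne_top μ _) (measure_ne_top μ _) |>.mpr
        (measure_mono (Set.subset_univ _))
    | succ k ih =>
      have heq : 1 + (N+1)*(k+1) = (1 + (N+1)*k) + (N+1) := by ring
      rw [heq]
      calc t ((1 + (N+1)*k) + (N+1)) ≤ θ * t (1 + (N+1)*k) := key _ (by omega)
        _ ≤ θ * (θ^k * M) := by
            exact mul_le_mul_of_nonneg_left ih hθ0.le
        _ = θ^(k+1) * M := by ring
  -- conclude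
  refine ⟨max 1 (M/θ), lt_of_lt_of_le one_pos (le_max_left _ _),
    θ ^ ((N+1 : ℝ)⁻¹), ⟨Real.rpow_pos_of_pos hθ0 _,
      Real.rpow_lt_one hθ0.le hθ1 (by positivity)⟩, ?_⟩
  intro n
  set γ : ℝ := θ ^ ((N+1 : ℝ)⁻¹) with hγ
  have hγ0 : 0 < γ := Real.rpow_pos_of_pos hθ0 _
  set q : ℕ := n / (N+1) with hq
  have hdm := Nat.div_add_mod n (N+1)
  have hml : n % (N+1) < N+1 := Nat.mod_lt _ (Nat.succ_pos N)
  have hq1 : (N+1)*q ≤ n := by rw [hq]; omega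
  have hq2 : n < (N+1)*(q+1) := by rw [hq, Nat.mul_succ]; omega
  -- {R > n} = {R ≥ n+1}
  have hset : {x | (n : ℕ∞) < R x} = {x | ((n+1 : ℕ) : ℕ∞) ≤ R x} := by
    ext x
    simp only [Set.mem_setOf_eq]
    rw [Nat.cast_add, Nat.cast_one, ENat.add_one_le_iff (by simp)]
  have step1 : (μ {x | (n : ℕ∞) < R x}).toReal ≤ θ^q * M := by
    rw [hset]
    calc t (n+1) ≤ t (1 + (N+1)*q) := htmono (by omega)
      _ ≤ θ^q * M := iter q
  have hexp : (N+1 : ℝ)⁻¹ * n ≤ (q+1 : ℕ) := by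
    rw [inv_mul_le_iff₀ (by positivity)]
    push_cast
    exact_mod_cast Nat.le_of_lt hq2
  have hγn : θ^(q+1) ≤ γ^n := by
    have h1 : γ^n = θ ^ ((N+1 : ℝ)⁻¹ * n) := by
      rw [hγ, ← Real.rpow_natCast (θ ^ ((N+1 : ℝ)⁻¹)) n, ← Real.rpow_mul hθ0.le]
    have h2 : (θ : ℝ)^(q+1) = θ ^ ((q+1 : ℕ) : ℝ) := by
      rw [Real.rpow_natCast]
    rw [h1, h2]
    exact Real.rpow_le_rpow_of_exponent_ge hθ0 hθ1.le hexp
  have step2 : θ^q * M ≤ max 1 (M/θ) * γ^n := by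
    have hMθ : θ^q * M = (M/θ) * θ^(q+1) := by
      field_simp
      ring
    rw [hMθ]
    calc (M/θ) * θ^(q+1) ≤ (M/θ) * γ^n :=
          mul_le_mul_of_nonneg_left hγn (by positivity)
      _ ≤ max 1 (M/θ) * γ^n :=
          mul_le_mul_of_nonneg_right (le_max_right _ _) (by positivity)
  rw [← ENNReal.ofReal_toReal (measure_ne_top μ _)]
  exact ENNReal.ofReal_le_ofReal (step1.trans step2)
end

section
/- Fix m ≥ 1, α ∈ (0,1], E > 0, set Δ = 4π/E, let δ ∈ (0,Δ), let Y ⊂ ℝ^m be an open ball of diameter 1, and let μ be a Borel measure on Y whose density with respect to Lebesgue measure is bounded above and below by positive constants C⁺ and C⁻. Then for every K > 0 there exists c₁ > 0 such that the following holds for every real b with |b| ≥ 16π/E: whenever y₁', …, y_k' ∈ Y are points such that the open balls B((δ+Δ)/|b|, y_i') are pairwise disjoint, contained in Y, and maximal with these properties (i.e. every open ball B((δ+Δ)/|b|, z) contained in Y meets some B((δ+Δ)/|b|, y_i')), and whenever points y_i'' ∈ B(Δ/|b|, y_i') are chosen and B̂ = ⋃_{i=1}^k B(δ/(2|b|), y_i''),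 then every continuous function w : Y → (0,∞) satisfying |log w(x) − log w(y)| ≤ K·|b|^α·|x−y|^α for all x, y ∈ Y obeys ∫_{B̂} w dμ ≥ c₁ · ∫_Y w dμ. -/
open MeasureTheory

set_option maxHeartbeats 2000000 in
/-- Proposition 3.7: for a measure `μ` on the open ball `Y` of diameter 1 with
density bounded above and below with respect to Lebesgue measure, and for any
maximal family of disjoint balls `B((δ+Δ)/|b|, y_i') ⊆ Y` with perturbed
centres `y_i'' ∈ B(Δ/|b|, y_i')` and `B̂ = ⋃ B(δ/(2|b|), y_i'')`, one has
`∫_{B̂} w dμ ≥ c₁ ∫_Y w dμ` for every positive `w` with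
`|log w|_α ≤ K|b|^α`, where `c₁ > 0` is uniform in `b`, the configuration
and `w`. Here `Δ = 4π/E`. -/
theorem stmt5 {m : ℕ} (hm : 1 ≤ m)
    (α : ℝ) (hα : α ∈ Set.Ioc (0 : ℝ) 1)
    (E : ℝ) (hE : 0 < E)
    (δ : ℝ) (hδ : δ ∈ Set.Ioo (0 : ℝ) (4 * Real.pi / E))
    (c : EuclideanSpace ℝ (Fin m))
    (μ : Measure (EuclideanSpace ℝ (Fin m)))
    (Cplus Cminus : ℝ) (hCp : 0 < Cplus) (hCm : 0 < Cminus)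
    (hdens : ∀ s : Set (EuclideanSpace ℝ (Fin m)), MeasurableSet s →
      s ⊆ Metric.ball c (1 / 2) →
      ENNReal.ofReal Cminus * volume s ≤ μ s ∧ μ s ≤ ENNReal.ofReal Cplus * volume s)
    (K : ℝ) (hK : 0 < K) :
    ∃ c₁ > (0 : ℝ), ∀ b : ℝ, 16 * Real.pi / E ≤ |b| →
      ∀ (k : ℕ) (y' y'' : Fin k → EuclideanSpace ℝ (Fin m)),
      (∀ i, y' i ∈ Metric.ball c (1 / 2)) →
      (∀ i, Metric.ball (y' i) ((δ + 4 * Real.pi / E) / |b|) ⊆ Metric.ball c (1 / 2)) →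
      (Pairwise fun i j => Disjoint (Metric.ball (y' i) ((δ + 4 * Real.pi / E) / |b|))
        (Metric.ball (y' j) ((δ + 4 * Real.pi / E) / |b|))) →
      (∀ z : EuclideanSpace ℝ (Fin m),
        Metric.ball z ((δ + 4 * Real.pi / E) / |b|) ⊆ Metric.ball c (1 / 2) →
        ∃ i, (Metric.ball z ((δ + 4 * Real.pi / E) / |b|) ∩
          Metric.ball (y' i) ((δ + 4 * Real.pi / E) / |b|)).Nonempty) →
      (∀ i, y'' i ∈ Metric.ball (y' i) ((4 * Real.pi / E) / |b|)) →
      ∀ w : EuclideanSpace ℝ (Fin m) → ℝ,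
      ContinuousOn w (Metric.ball c (1 / 2)) →
      (∀ x ∈ Metric.ball c (1 / 2), 0 < w x) →
      (∀ x ∈ Metric.ball c (1 / 2), ∀ y ∈ Metric.ball c (1 / 2),
        |Real.log (w x) - Real.log (w y)| ≤ K * |b| ^ α * dist x y ^ α) →
      ENNReal.ofReal c₁ * ∫⁻ x in Metric.ball c (1 / 2), ENNReal.ofReal (w x) ∂μ ≤
        ∫⁻ x in ⋃ i, Metric.ball (y'' i) (δ / (2 * |b|)), ENNReal.ofReal (w x) ∂μ := by
  obtain ⟨hα0, hα1⟩ := hα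
  obtain ⟨hδ0, hδΔ⟩ := hδ
  set Δ : ℝ := 4 * Real.pi / E with hΔdef
  have hΔ0 : 0 < Δ := by rw [hΔdef]; positivity
  have hδΔ0 : 0 < δ + Δ := by linarith
  set M : ℝ := K * (7 * Δ) ^ α with hMdef
  have hM0 : 0 < M := mul_pos hK (Real.rpow_pos_of_pos (by linarith) α)
  have hc₁pos : 0 < Real.exp (-(2 * M)) * (Cminus / Cplus) * (δ / (6 * (δ + Δ))) ^ m :=
    mul_pos (mul_pos (Real.exp_pos _) (div_pos hCm hCp))
      (pow_pos (div_pos hδ0 (by linarith)) m)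
  refine ⟨Real.exp (-(2 * M)) * (Cminus / Cplus) * (δ / (6 * (δ + Δ))) ^ m, hc₁pos, ?_⟩
  intro b hbE k y' y'' hy'mem hsub hdisj hmax hy'' w hwcont hwpos hwhold
  set t : ℝ := |b| with htdef
  have ht0 : 0 < t := lt_of_lt_of_le (by rw [hΔdef] at hΔ0; positivity) hbE
  have ht4 : 4 * Δ ≤ t := by
    have : 4 * Δ = 16 * Real.pi / E := by rw [hΔdef]; ring
    linarith [hbE, this.ge]
  set ρ : ℝ := (δ + Δ) / t with hρdef
  have hρ0 : 0 < ρ := div_pos hδΔ0 ht0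
  have hρt : ρ * t = δ + Δ := div_mul_cancel₀ _ ht0.ne'
  have hΔt : Δ / t * t = Δ := div_mul_cancel₀ _ ht0.ne'
  have hρhalf : ρ < 1 / 2 := by
    rw [hρdef, div_lt_iff₀ ht0]
    nlinarith
  -- the perturbed centres lie in Y
  have hΔρ : Δ / t < ρ := by
    rw [hρdef, div_lt_div_iff₀ ht0 ht0]
    nlinarith
  have hy''Y : ∀ i, y'' i ∈ Metric.ball c (1 / 2) := by
    intro i
    apply hsub i
    have := hy'' i
    rw [Metric.mem_ball] at this ⊢
    linarith
  -- Hölder control of w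
  have hexp : ∀ x ∈ Metric.ball c (1 / 2), ∀ i : Fin k, t * dist x (y'' i) ≤ 7 * Δ →
      w x ≤ w (y'' i) * Real.exp M ∧ w (y'' i) * Real.exp (-M) ≤ w x := by
    intro x hx i hdist
    have hx0 := hwpos x hx
    have hy0 := hwpos _ (hy''Y i)
    have hbnd : K * t ^ α * dist x (y'' i) ^ α ≤ M := by
      rw [mul_assoc, ← Real.mul_rpow ht0.le dist_nonneg, hMdef]
      exact mul_le_mul_of_nonneg_left
        (Real.rpow_le_rpow (mul_nonneg ht0.le dist_nonneg) hdist hα0.le) hK.le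
    have habs : |Real.log (w x) - Real.log (w (y'' i))| ≤ M :=
      (hwhold x hx (y'' i) (hy''Y i)).trans hbnd
    rw [abs_le] at habs
    constructor
    · have h := Real.exp_le_exp.mpr
        (show Real.log (w x) ≤ Real.log (w (y'' i)) + M by linarith [habs.2])
      rw [Real.exp_add, Real.exp_log hy0, Real.exp_log hx0] at h
      exact h
    · have h := Real.exp_le_exp.mpr
        (show Real.log (w (y'' i)) + -M ≤ Real.log (w x) by linarith [habs.1])
      rw [Real.exp_add, Real.exp_log hy0, Real.exp_log hx0] at h
      calc w (y'' i) * Real.exp (-M) = w (y'' i) * Real.exp (-M) := rfl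
        _ ≤ w x := h
  -- covering lemma
  have hcover : ∀ x ∈ Metric.ball c (1 / 2), ∃ i, x ∈ Metric.ball (y' i) (3 * ρ) := by
    intro x hx
    have hxc : dist x c < 1 / 2 := Metric.mem_ball.mp hx
    have hz : ∃ z : EuclideanSpace ℝ (Fin m), dist x z < ρ ∧
        Metric.ball z ρ ⊆ Metric.ball c (1 / 2) := by
      rcases le_or_gt (dist x c) (1 / 2 - ρ) with h | h
      · refine ⟨x, by simpa using hρ0, fun y hy => ?_⟩
        rw [Metric.mem_ball] at hy ⊢
        have := dist_triangle y x c
        linarith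
      · have hd0 : 0 < dist x c := by linarith
        set s : ℝ := (1 / 2 - ρ) / dist x c with hsdef
        have hs0 : 0 ≤ s := div_nonneg (by linarith) hd0.le
        have hs1 : s < 1 := (div_lt_one hd0).2 h
        set z : EuclideanSpace ℝ (Fin m) := c + s • (x - c) with hzdef
        have hzc : dist z c = 1 / 2 - ρ := by
          rw [hzdef, dist_eq_norm, add_sub_cancel_left, norm_smul, Real.norm_eq_abs,
            abs_of_nonneg hs0, ← dist_eq_norm, hsdef]
          field_simp
        have hxz : dist x z = dist x c - (1 / 2 - ρ) := by
          have hsub' : x - z = (1 - s) • (x - c) := by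
            rw [hzdef]; module
          rw [dist_eq_norm, hsub', norm_smul, Real.norm_eq_abs,
            abs_of_nonneg (by linarith), ← dist_eq_norm, hsdef]
          field_simp
        refine ⟨z, ?_, fun y hy => ?_⟩
        · rw [hxz]; linarith
        · rw [Metric.mem_ball] at hy ⊢
          have := dist_triangle y z c
          linarith [hzc]
    obtain ⟨z, hxz, hzsub⟩ := hz
    obtain ⟨i, p, hp⟩ := hmax z hzsub
    have hp1 : dist p z < ρ := Metric.mem_ball.mp hp.1
    have hp2 : dist p (y' i) < ρ := Metric.mem_ball.mp hp.2
    refine ⟨i, Metric.mem_ball.mpr ?_⟩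
    have h1 := dist_triangle x z (y' i)
    have h2 := dist_triangle z p (y' i)
    have h3 : dist z p = dist p z := dist_comm _ _
    linarith
  -- small balls sit inside the big disjoint balls
  have hBsub : ∀ i, Metric.ball (y'' i) (δ / (2 * t)) ⊆ Metric.ball (y' i) ρ := by
    intro i p hp
    rw [Metric.mem_ball] at hp ⊢
    have h2 : dist (y'' i) (y' i) < Δ / t := Metric.mem_ball.mp (hy'' i)
    have h3 := dist_triangle p (y'' i) (y' i)
    have h4 : δ / (2 * t) + Δ / t ≤ ρ := by
      rw [hρdef, div_add_div _ _ (by positivity) ht0.ne', div_le_div_iff₀ (by positivity) ht0]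
      ring_nf
      nlinarith
    linarith
  have hBsubY : ∀ i, Metric.ball (y'' i) (δ / (2 * t)) ⊆ Metric.ball c (1 / 2) :=
    fun i => (hBsub i).trans (hsub i)
  -- volume of balls
  obtain ⟨V, hVdef⟩ : ∃ v : ENNReal,
      volume (Metric.ball (0 : EuclideanSpace ℝ (Fin m)) 1) = v := ⟨_, rfl⟩
  have hvol : ∀ (x : EuclideanSpace ℝ (Fin m)) (r : ℝ), 0 < r →
      volume (Metric.ball x r) = ENNReal.ofReal (r ^ m) * V := by
    intro x r hr
    rw [Measure.addHaar_ball_of_pos volume x hr, finrank_euclideanSpace_fin, hVdef]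
  -- distance bounds
  have hdistU : ∀ i : Fin k, ∀ x ∈ Metric.ball (y' i) (3 * ρ), t * dist x (y'' i) ≤ 7 * Δ := by
    intro i x hx
    have h1 : dist x (y' i) < 3 * ρ := Metric.mem_ball.mp hx
    have h2 : dist (y' i) (y'' i) < Δ / t := by
      rw [dist_comm]; exact Metric.mem_ball.mp (hy'' i)
    have h3 := dist_triangle x (y' i) (y'' i)
    have h4 : t * dist x (y'' i) ≤ t * (3 * ρ + Δ / t) :=
      mul_le_mul_of_nonneg_left (by linarith) ht0.le
    have h5 : t * (3 * ρ + Δ / t) = 3 * (δ + Δ) + Δ := by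
      rw [mul_add, mul_comm t (3 * ρ), mul_assoc, hρt, mul_comm t (Δ / t), hΔt]
    linarith
  have hdistL : ∀ i : Fin k, ∀ x ∈ Metric.ball (y'' i) (δ / (2 * t)),
      t * dist x (y'' i) ≤ 7 * Δ := by
    intro i x hx
    have h1 : dist x (y'' i) < δ / (2 * t) := Metric.mem_ball.mp hx
    have h4 : t * dist x (y'' i) ≤ t * (δ / (2 * t)) :=
      mul_le_mul_of_nonneg_left h1.le ht0.le
    have h5 : t * (δ / (2 * t)) = δ / 2 := by
      rw [mul_comm 2 t, ← div_div, ← mul_div_assoc, ← mul_div_assoc,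
        mul_div_cancel_left₀ _ ht0.ne']
    linarith
  -- algebraic packing lemmas in ℝ≥0∞
  have pack2 : ∀ a b' : ℝ, 0 ≤ a →
      ENNReal.ofReal a * (ENNReal.ofReal b' * V) = ENNReal.ofReal (a * b') * V := by
    intro a b' ha; rw [ENNReal.ofReal_mul ha]; ring
  have pack3 : ∀ a b' c' : ℝ, 0 ≤ a → 0 ≤ b' →
      ENNReal.ofReal a * (ENNReal.ofReal b' * (ENNReal.ofReal c' * V)) =
        ENNReal.ofReal (a * (b' * c')) * V := by
    intro a b' c' ha hb
    rw [ENNReal.ofReal_mul ha, ENNReal.ofReal_mul hb]; ring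
  -- main real identity
  have hb2 : δ / (6 * (δ + Δ)) * (3 * ρ) = δ / (2 * t) := by
    rw [hρdef]; field_simp [ht0.ne', hδΔ0.ne']; ring
  have hexpE : Real.exp (-M) = Real.exp (-(2 * M)) * Real.exp M := by
    rw [← Real.exp_add]; congr 1; ring
  -- per-index estimates
  have hw''pos : ∀ i, 0 < w (y'' i) := fun i => hwpos _ (hy''Y i)
  have upper : ∀ i : Fin k,
      ∫⁻ x in Metric.ball (y' i) (3 * ρ) ∩ Metric.ball c (1 / 2), ENNReal.ofReal (w x) ∂μ ≤
        ENNReal.ofReal (w (y'' i) * Real.exp M) *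
          (ENNReal.ofReal Cplus * (ENNReal.ofReal ((3 * ρ) ^ m) * V)) := by
    intro i
    have hmeas : MeasurableSet (Metric.ball (y' i) (3 * ρ) ∩ Metric.ball c (1 / 2)) :=
      measurableSet_ball.inter measurableSet_ball
    have hμ := (hdens _ hmeas Set.inter_subset_right).2
    calc ∫⁻ x in Metric.ball (y' i) (3 * ρ) ∩ Metric.ball c (1 / 2), ENNReal.ofReal (w x) ∂μ
        ≤ ∫⁻ _ in Metric.ball (y' i) (3 * ρ) ∩ Metric.ball c (1 / 2),
            ENNReal.ofReal (w (y'' i) * Real.exp M) ∂μ := by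
          refine setLIntegral_mono' hmeas fun x hx => ENNReal.ofReal_le_ofReal ?_
          exact (hexp x hx.2 i (hdistU i x hx.1)).1
      _ = ENNReal.ofReal (w (y'' i) * Real.exp M) *
            μ (Metric.ball (y' i) (3 * ρ) ∩ Metric.ball c (1 / 2)) := setLIntegral_const _ _
      _ ≤ ENNReal.ofReal (w (y'' i) * Real.exp M) *
            (ENNReal.ofReal Cplus * volume (Metric.ball (y' i) (3 * ρ) ∩ Metric.ball c (1 / 2))) :=
          mul_le_mul_right hμ _
      _ ≤ ENNReal.ofReal (w (y'' i) * Real.exp M) *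
            (ENNReal.ofReal Cplus * volume (Metric.ball (y' i) (3 * ρ))) := by
          exact mul_le_mul_right
            (mul_le_mul_right (measure_mono Set.inter_subset_left) _) _
      _ = ENNReal.ofReal (w (y'' i) * Real.exp M) *
            (ENNReal.ofReal Cplus * (ENNReal.ofReal ((3 * ρ) ^ m) * V)) := by
          rw [hvol _ _ (by linarith)]
  have lower : ∀ i : Fin k,
      ENNReal.ofReal (w (y'' i) * Real.exp (-M)) *
          (ENNReal.ofReal Cminus * (ENNReal.ofReal ((δ / (2 * t)) ^ m) * V)) ≤
        ∫⁻ x in Metric.ball (y'' i) (δ / (2 * t)), ENNReal.ofReal (w x) ∂μ := by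
    intro i
    have hrpos : (0 : ℝ) < δ / (2 * t) := by positivity
    have hμ := (hdens _ measurableSet_ball (hBsubY i)).1
    calc ENNReal.ofReal (w (y'' i) * Real.exp (-M)) *
          (ENNReal.ofReal Cminus * (ENNReal.ofReal ((δ / (2 * t)) ^ m) * V))
        = ENNReal.ofReal (w (y'' i) * Real.exp (-M)) *
            (ENNReal.ofReal Cminus * volume (Metric.ball (y'' i) (δ / (2 * t)))) := by
          rw [hvol _ _ hrpos]
      _ ≤ ENNReal.ofReal (w (y'' i) * Real.exp (-M)) *
            μ (Metric.ball (y'' i) (δ / (2 * t))) := mul_le_mul_right hμ _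
      _ = ∫⁻ _ in Metric.ball (y'' i) (δ / (2 * t)),
            ENNReal.ofReal (w (y'' i) * Real.exp (-M)) ∂μ := (setLIntegral_const _ _).symm
      _ ≤ ∫⁻ x in Metric.ball (y'' i) (δ / (2 * t)), ENNReal.ofReal (w x) ∂μ := by
          refine setLIntegral_mono' measurableSet_ball fun x hx => ENNReal.ofReal_le_ofReal ?_
          exact (hexp x (hBsubY i hx) i (hdistL i x hx)).2
  have key : ∀ i : Fin k,
      ENNReal.ofReal (Real.exp (-(2 * M)) * (Cminus / Cplus) * (δ / (6 * (δ + Δ))) ^ m) *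
          (ENNReal.ofReal (w (y'' i) * Real.exp M) *
            (ENNReal.ofReal Cplus * (ENNReal.ofReal ((3 * ρ) ^ m) * V))) ≤
        ENNReal.ofReal (w (y'' i) * Real.exp (-M)) *
          (ENNReal.ofReal Cminus * (ENNReal.ofReal ((δ / (2 * t)) ^ m) * V)) := by
    intro i
    rw [pack3 _ _ _ (mul_nonneg (hw''pos i).le (Real.exp_pos _).le) hCp.le,
      pack3 _ _ _ (mul_nonneg (hw''pos i).le (Real.exp_pos _).le) hCm.le,
      pack2 _ _ hc₁pos.le]
    refine mul_le_mul_left (ENNReal.ofReal_le_ofReal (le_of_eq ?_)) V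
    have hb3 : (δ / (2 * t)) ^ m = (δ / (6 * (δ + Δ))) ^ m * (3 * ρ) ^ m := by
      rw [← mul_pow, hb2]
    rw [hb3, hexpE]
    have hCC : Cminus / Cplus * Cplus = Cminus := div_mul_cancel₀ _ hCp.ne'
    generalize ((3 : ℝ) * ρ) ^ m = Q
    generalize (δ / (6 * (δ + Δ))) ^ m = P
    generalize w (y'' i) = W
    generalize Real.exp (-(2 * M)) = e₁
    generalize Real.exp M = e₂
    linear_combination (e₁ * P * W * e₂ * Q) * hCC
  -- first covering estimate
  have step1 : ∫⁻ x in Metric.ball c (1 / 2), ENNReal.ofReal (w x) ∂μ ≤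
      ∑' i : Fin k, ∫⁻ x in Metric.ball (y' i) (3 * ρ) ∩ Metric.ball c (1 / 2),
        ENNReal.ofReal (w x) ∂μ := by
    refine le_trans (lintegral_mono_set ?_)
      (lintegral_iUnion_le (fun i => Metric.ball (y' i) (3 * ρ) ∩ Metric.ball c (1 / 2)) _)
    intro x hx
    obtain ⟨i, hi⟩ := hcover x hx
    exact Set.mem_iUnion.2 ⟨i, hi, hx⟩
  -- disjointness of the small balls
  have hdisj'' : Pairwise (Function.onFun Disjoint
      fun i => Metric.ball (y'' i) (δ / (2 * t))) := fun i j hij =>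
    Set.disjoint_of_subset (hBsub i) (hBsub j) (hdisj hij)
  calc ENNReal.ofReal (Real.exp (-(2 * M)) * (Cminus / Cplus) * (δ / (6 * (δ + Δ))) ^ m) *
        ∫⁻ x in Metric.ball c (1 / 2), ENNReal.ofReal (w x) ∂μ
      ≤ ENNReal.ofReal (Real.exp (-(2 * M)) * (Cminus / Cplus) * (δ / (6 * (δ + Δ))) ^ m) *
          ∑' i : Fin k, ∫⁻ x in Metric.ball (y' i) (3 * ρ) ∩ Metric.ball c (1 / 2),
            ENNReal.ofReal (w x) ∂μ := mul_le_mul_right step1 _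
    _ = ∑' i : Fin k,
          ENNReal.ofReal (Real.exp (-(2 * M)) * (Cminus / Cplus) * (δ / (6 * (δ + Δ))) ^ m) *
            ∫⁻ x in Metric.ball (y' i) (3 * ρ) ∩ Metric.ball c (1 / 2),
              ENNReal.ofReal (w x) ∂μ := ENNReal.tsum_mul_left.symm
    _ ≤ ∑' i : Fin k, ∫⁻ x in Metric.ball (y'' i) (δ / (2 * t)), ENNReal.ofReal (w x) ∂μ := by
        refine ENNReal.tsum_le_tsum fun i => ?_
        exact ((mul_le_mul_right (upper i) _).trans (key i)).trans (lower i)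
    _ = ∫⁻ x in ⋃ i, Metric.ball (y'' i) (δ / (2 * t)), ENNReal.ofReal (w x) ∂μ :=
        (lintegral_iUnion (fun i => measurableSet_ball) hdisj'' _).symm
end

section
/- Let m ≥ 1 and E > 0. Let ψ : ℝ^m → ℝ be C¹ and let ℓ : ℝ^m → ℝ^m be a C¹ vector field with |ℓ(x)| ≤ 1 and |Dψ(x)·ℓ(x)| ≥ E/2 for all x ∈ ℝ^m. Then for every real b ≠ 0, every y' ∈ ℝ^m and every θ₀ ∈ ℝ, there exists y'' ∈ ℝ^m with |y'' − y'| ≤ 4π/(E|b|) and an integer k ∈ ℤ such that b·(ψ(y'') − ψ(y')) = θ₀ + 2πk. -/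
set_option maxHeartbeats 1000000


/-- Step (3) of the Cancellation Lemma: flowing along a unit vector field `ℓ`
on which `|Dψ·ℓ| ≥ E/2`, the quantity `b(ψ(y'') - ψ(y'))` hits any prescribed
value modulo `2π` for some `y''` with `|y'' - y'| ≤ 4π/(E|b|)`. -/
theorem stmt6 {m : ℕ} (hm : 1 ≤ m) (E : ℝ) (hE : 0 < E)
    (ψ : EuclideanSpace ℝ (Fin m) → ℝ) (hψ : ContDiff ℝ 1 ψ)
    (ℓ : EuclideanSpace ℝ (Fin m) → EuclideanSpace ℝ (Fin m)) (hℓ : ContDiff ℝ 1 ℓ)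
    (hℓ1 : ∀ x, ‖ℓ x‖ ≤ 1)
    (hUNI : ∀ x, E / 2 ≤ |fderiv ℝ ψ x (ℓ x)|) :
    ∀ b : ℝ, b ≠ 0 → ∀ y' : EuclideanSpace ℝ (Fin m), ∀ θ₀ : ℝ,
      ∃ y'' : EuclideanSpace ℝ (Fin m), ‖y'' - y'‖ ≤ 4 * Real.pi / (E * |b|) ∧
        ∃ k : ℤ, b * (ψ y'' - ψ y') = θ₀ + 2 * Real.pi * k := by
  intro b hb y' θ₀
  have hπ : (0:ℝ) < Real.pi := Real.pi_pos
  have hb' : (0:ℝ) < |b| := abs_pos.mpr hb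
  set f : EuclideanSpace ℝ (Fin m) → ℝ := fun y => b * (ψ y - ψ y') with hf_def
  set c : ℝ := |b| * (E / 2) with hc_def
  have hc : 0 < c := by positivity
  set R : ℝ := 4 * Real.pi / (E * |b|) with hR_def
  have hR : 0 < R := by positivity
  have hcR : c * R = 2 * Real.pi := by
    rw [hc_def, hR_def]; field_simp; ring
  have hfC : ContDiff ℝ 1 f := contDiff_const.mul (hψ.sub contDiff_const)
  have hfd : Differentiable ℝ f := hfC.differentiable one_ne_zero
  have hψd : Differentiable ℝ ψ := hψ.differentiable one_ne_zero
  have hDf : ∀ x v, fderiv ℝ f x v = b * fderiv ℝ ψ x v := by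
    intro x v
    have h1 : fderiv ℝ f x = b • fderiv ℝ (fun y => ψ y - ψ y') x :=
      fderiv_const_mul ((hψd x).sub_const _) b
    rw [h1]
    simp [fderiv_sub_const]
  have hf0 : f y' = 0 := by simp [hf_def]
  have hlow : ∀ x, c ≤ |fderiv ℝ f x (ℓ x)| := by
    intro x
    rw [hDf, abs_mul, hc_def]
    exact mul_le_mul_of_nonneg_left (hUNI x) (abs_nonneg b)
  have hDcont : Continuous (fderiv ℝ f) := hfC.continuous_fderiv one_ne_zero
  -- uniform Taylor estimate on the ball
  have key : ∀ ε : ℝ, 0 < ε → ∃ δ : ℝ, 0 < δ ∧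
      ∀ x ∈ Metric.closedBall y' R, ∀ h : EuclideanSpace ℝ (Fin m), ‖h‖ ≤ δ →
        |f (x + h) - f x - fderiv ℝ f x h| ≤ ε * ‖h‖ := by
    intro ε hε
    have hK : IsCompact (Metric.closedBall y' (R + 1)) := isCompact_closedBall _ _
    have hUC := hK.uniformContinuousOn_of_continuous hDcont.continuousOn
    rw [Metric.uniformContinuousOn_iff] at hUC
    obtain ⟨δ, hδ, hδ'⟩ := hUC ε hε
    refine ⟨min (δ / 2) 1, by positivity, ?_⟩
    intro x hx h hh
    have hxK : x ∈ Metric.closedBall y' (R + 1) :=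
      Metric.closedBall_subset_closedBall (by linarith) hx
    have hsub : Metric.closedBall x ‖h‖ ⊆ Metric.closedBall y' (R + 1) := by
      intro z hz
      have h1 : dist z y' ≤ dist z x + dist x y' := dist_triangle z x y'
      have h2 : dist z x ≤ ‖h‖ := Metric.mem_closedBall.mp hz
      have h3 : dist x y' ≤ R := Metric.mem_closedBall.mp hx
      have h4 : ‖h‖ ≤ 1 := hh.trans (min_le_right _ _)
      exact Metric.mem_closedBall.mpr (by linarith)
    have bound : ∀ z ∈ Metric.closedBall x ‖h‖,
        ‖fderiv ℝ f z - fderiv ℝ f x‖ ≤ ε := by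
      intro z hz
      have hzK : z ∈ Metric.closedBall y' (R + 1) := hsub hz
      have hdzx : dist z x < δ := by
        have h2 : dist z x ≤ ‖h‖ := Metric.mem_closedBall.mp hz
        have : ‖h‖ ≤ δ / 2 := hh.trans (min_le_left _ _)
        linarith
      have := hδ' z hzK x hxK hdzx
      rw [dist_eq_norm] at this
      exact this.le
    have hconv : Convex ℝ (Metric.closedBall x ‖h‖) := convex_closedBall _ _
    have hmem1 : x ∈ Metric.closedBall x ‖h‖ := Metric.mem_closedBall_self (norm_nonneg h)
    have hmem2 : x + h ∈ Metric.closedBall x ‖h‖ := by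
      rw [Metric.mem_closedBall, dist_eq_norm]
      simp
    have := hconv.norm_image_sub_le_of_norm_hasFDerivWithin_le'
      (fun z _ => (hfd z).hasFDerivAt.hasFDerivWithinAt) bound hmem1 hmem2
    simpa [Real.norm_eq_abs] using this
  -- single step increasing |f|
  have step : ∀ ε : ℝ, 0 < ε → ∃ δ : ℝ, 0 < δ ∧
      ∀ x ∈ Metric.closedBall y' R, ∀ t : ℝ, 0 ≤ t → t ≤ δ →
        ∃ x', ‖x' - x‖ ≤ t ∧ |f x| + (c - ε) * t ≤ |f x'| := by
    intro ε hε
    obtain ⟨δ, hδ, hkey⟩ := key ε hε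
    refine ⟨δ, hδ, ?_⟩
    intro x hx t ht htδ
    set d : ℝ := fderiv ℝ f x (ℓ x) with hd_def
    have hdc : c ≤ |d| := hlow x
    set s : ℝ := (if 0 ≤ f x then (1:ℝ) else -1) * (if 0 ≤ d then (1:ℝ) else -1) with hs_def
    have hs1 : |s| = 1 := by
      rw [hs_def, abs_mul]
      split_ifs <;> norm_num
    set h : EuclideanSpace ℝ (Fin m) := (s * t) • ℓ x with hh_def
    have hhn : ‖h‖ ≤ t := by
      rw [hh_def, norm_smul]
      calc ‖s * t‖ * ‖ℓ x‖ ≤ ‖s * t‖ * 1 :=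
            mul_le_mul_of_nonneg_left (hℓ1 x) (norm_nonneg _)
        _ = |s| * |t| := by rw [mul_one, Real.norm_eq_abs, abs_mul]
        _ = t := by rw [hs1, one_mul, abs_of_nonneg ht]
    have hDh : fderiv ℝ f x h = s * t * d := by
      rw [hh_def, map_smul, smul_eq_mul, hd_def]
    have htaylor := hkey x hx h (hhn.trans htδ)
    have hεh : ε * ‖h‖ ≤ ε * t := mul_le_mul_of_nonneg_left hhn hε.le
    -- |f x + s t d| = |f x| + t * |d|
    have hsum : |f x + s * t * d| = |f x| + t * |d| := by
      rcases le_or_gt 0 (f x) with hfx | hfx <;> rcases le_or_gt 0 d with hd0 | hd0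
      · have hs : s = 1 := by rw [hs_def, if_pos hfx, if_pos hd0]; ring
        rw [hs, abs_of_nonneg hfx, abs_of_nonneg hd0,
          abs_of_nonneg (by nlinarith : (0:ℝ) ≤ f x + 1 * t * d)]
        ring
      · have hs : s = -1 := by rw [hs_def, if_pos hfx, if_neg (not_le.mpr hd0)]; ring
        rw [hs, abs_of_nonneg hfx, abs_of_neg hd0,
          abs_of_nonneg (by nlinarith : (0:ℝ) ≤ f x + (-1) * t * d)]
        ring
      · have hs : s = -1 := by rw [hs_def, if_neg (not_le.mpr hfx), if_pos hd0]; ring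
        rw [hs, abs_of_neg hfx, abs_of_nonneg hd0,
          abs_of_nonpos (by nlinarith : f x + (-1) * t * d ≤ 0)]
        ring
      · have hs : s = 1 := by
          rw [hs_def, if_neg (not_le.mpr hfx), if_neg (not_le.mpr hd0)]; ring
        rw [hs, abs_of_neg hfx, abs_of_neg hd0,
          abs_of_nonpos (by nlinarith : f x + 1 * t * d ≤ 0)]
        ring
    refine ⟨x + h, by simpa using hhn, ?_⟩
    have h1 : |f (x + h)| ≥ |f x + s * t * d| - |f (x + h) - (f x + s * t * d)| := by
      have := abs_sub_abs_le_abs_sub (f x + s * t * d) (f (x + h))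
      have h2 := abs_sub_comm (f x + s * t * d) (f (x + h))
      linarith [le_abs_self (|f x + s*t*d| - |f (x+h)|)]
    have h2 : |f (x + h) - (f x + s * t * d)| ≤ ε * t := by
      have : f (x + h) - (f x + s * t * d) = f (x + h) - f x - fderiv ℝ f x h := by
        rw [hDh]; ring
      rw [this]
      exact htaylor.trans hεh
    have h3 : t * |d| ≥ t * c := mul_le_mul_of_nonneg_left hdc ht
    rw [hsum] at h1
    have h4 : (c - ε) * t = t * c - ε * t := by ring
    rw [h4]
    linarith
  -- chain steps to reach |f| ≥ (c - ε) R
  have chain : ∀ ε : ℝ, 0 < ε → ∃ x ∈ Metric.closedBall y' R, (c - ε) * R ≤ |f x| := by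
    intro ε hε
    obtain ⟨δ, hδ, hstep⟩ := step ε hε
    obtain ⟨n, hn⟩ := exists_nat_gt (R / δ)
    have hn0 : 0 < n := by
      by_contra h
      push_neg at h
      interval_cases n
      simp at hn
      nlinarith [div_pos hR hδ]
    set t : ℝ := R / n with ht_def
    have hnR : (0:ℝ) < n := by exact_mod_cast hn0
    have ht0 : 0 < t := div_pos hR hnR
    have htδ : t ≤ δ := by
      rw [ht_def, div_le_iff₀ hnR]
      rw [div_lt_iff₀ hδ] at hn
      nlinarith
    have hnt : (n : ℝ) * t = R := by
      rw [ht_def]; field_simp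
    have claim : ∀ i : ℕ, i ≤ n → ∃ x, ‖x - y'‖ ≤ i * t ∧ (c - ε) * (i * t) ≤ |f x| := by
      intro i
      induction i with
      | zero => intro _; exact ⟨y', by simp, by simp [hf0]⟩
      | succ i ih =>
        intro hin
        obtain ⟨x, hx1, hx2⟩ := ih (Nat.le_of_succ_le hin)
        have hxball : x ∈ Metric.closedBall y' R := by
          rw [Metric.mem_closedBall, dist_eq_norm]
          refine hx1.trans ?_
          rw [← hnt]
          have : (i:ℝ) ≤ n := by exact_mod_cast Nat.le_of_succ_le hin
          nlinarith
        obtain ⟨x', hx'1, hx'2⟩ := hstep x hxball t ht0.le htδ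
        refine ⟨x', ?_, ?_⟩
        · calc ‖x' - y'‖ ≤ ‖x' - x‖ + ‖x - y'‖ := norm_sub_le_norm_sub_add_norm_sub _ _ _
            _ ≤ t + i * t := add_le_add hx'1 hx1
            _ = (i + 1 : ℕ) * t := by push_cast; ring
        · have : (c - ε) * ((i + 1 : ℕ) * t) = (c - ε) * (i * t) + (c - ε) * t := by
            push_cast; ring
          rw [this]
          calc (c - ε) * (↑i * t) + (c - ε) * t ≤ |f x| + (c - ε) * t := by linarith
            _ ≤ |f x'| := hx'2
    obtain ⟨x, hx1, hx2⟩ := claim n le_rfl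
    refine ⟨x, ?_, by rwa [hnt] at hx2⟩
    rw [Metric.mem_closedBall, dist_eq_norm]
    rw [hnt] at hx1
    exact hx1
  -- maximizer
  have hKcb : IsCompact (Metric.closedBall y' R) := isCompact_closedBall _ _
  obtain ⟨z, hzmem, hzmax⟩ := hKcb.exists_isMaxOn ⟨y', Metric.mem_closedBall_self hR.le⟩
    ((continuous_abs.comp hfC.continuous).continuousOn)
  have h2π : 2 * Real.pi ≤ |f z| := by
    rw [← hcR]
    by_contra hlt
    push_neg at hlt
    set ε := (c * R - |f z|) / (2 * R) with hε_def
    have hεpos : 0 < ε := by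
      apply div_pos (by linarith) (by linarith)
    obtain ⟨x, hxmem, hxge⟩ := chain ε hεpos
    have hle : |f x| ≤ |f z| := hzmax hxmem
    have hεR : ε * R = (c * R - |f z|) / 2 := by
      rw [hε_def]; field_simp
    have hexp : (c - ε) * R = c * R - ε * R := by ring
    rw [hexp] at hxge
    linarith
  -- connectedness and IVT
  have hconn : IsPreconnected (f '' Metric.closedBall y' R) :=
    ((convex_closedBall y' R).isPreconnected).image f hfC.continuous.continuousOn
  have hoc := hconn.ordConnected
  have h0mem : (0:ℝ) ∈ f '' Metric.closedBall y' R :=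
    ⟨y', Metric.mem_closedBall_self hR.le, hf0⟩
  have hzmem' : f z ∈ f '' Metric.closedBall y' R := ⟨z, hzmem, rfl⟩
  have huIcc : Set.uIcc (0:ℝ) (f z) ⊆ f '' Metric.closedBall y' R :=
    hoc.uIcc_subset h0mem hzmem'
  -- choose θ ∈ uIcc 0 (f z) with θ = θ₀ + 2πk
  have hmain : ∃ k : ℤ, θ₀ + 2 * Real.pi * k ∈ Set.uIcc (0:ℝ) (f z) := by
    rcases le_or_gt 0 (f z) with hfz | hfz
    · have hfz2 : 2 * Real.pi ≤ f z := by rwa [abs_of_nonneg hfz] at h2π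
      refine ⟨-⌊θ₀ / (2 * Real.pi)⌋, ?_⟩
      rw [Set.uIcc_of_le (by linarith), Set.mem_Icc]
      have h1 : (⌊θ₀ / (2 * Real.pi)⌋ : ℝ) ≤ θ₀ / (2 * Real.pi) := Int.floor_le _
      have h2 : θ₀ / (2 * Real.pi) < ⌊θ₀ / (2 * Real.pi)⌋ + 1 := Int.lt_floor_add_one _
      have hθ : θ₀ = (θ₀ / (2 * Real.pi)) * (2 * Real.pi) := by field_simp
      push_cast
      constructor <;> nlinarith
    · have hfz2 : f z ≤ -(2 * Real.pi) := by
        rw [abs_of_neg hfz] at h2π; linarith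
      refine ⟨-⌈θ₀ / (2 * Real.pi)⌉, ?_⟩
      rw [Set.uIcc_of_ge (by linarith), Set.mem_Icc]
      have h1 : θ₀ / (2 * Real.pi) ≤ (⌈θ₀ / (2 * Real.pi)⌉ : ℝ) := Int.le_ceil _
      have h2 : (⌈θ₀ / (2 * Real.pi)⌉ : ℝ) < θ₀ / (2 * Real.pi) + 1 := Int.ceil_lt_add_one _
      have hθ : θ₀ = (θ₀ / (2 * Real.pi)) * (2 * Real.pi) := by field_simp
      push_cast
      constructor <;> nlinarith
  obtain ⟨k, hk⟩ := hmain
  obtain ⟨y'', hy''mem, hy''eq⟩ := huIcc hk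
  refine ⟨y'', ?_, k, ?_⟩
  · rw [← dist_eq_norm]
    exact Metric.mem_closedBall.mp hy''mem
  · rw [← hy''eq]
end

section
/- Let Y ⊆ ℝ^m be open and convex, α ∈ (0,1], C₁ ≥ 1, ρ₀ ∈ (0,1), and let h₁, …, h_n : Y → Y be C¹ maps such that for each 1 ≤ i ≤ n the composition h_i ∘ h_{i+1} ∘ ⋯ ∘ h_n satisfies sup_{y∈Y} ‖D(h_i ∘ ⋯ ∘ h_n)(y)‖ ≤ C₁·ρ₀^{n−i+1}, and each h_i satisfies |log|det Dh_i||_α ≤ C₁. Then the composition h = h₁ ∘ ⋯ ∘ h_n satisfies |log|det Dh||_α ≤ C₁²/(1 − ρ₀^α). -/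
/-- `compSeq h i k = h i ∘ h (i+1) ∘ ⋯ ∘ h (i+k-1)` (and the identity for `k = 0`). -/
def compSeq {E : Type*} (h : ℕ → E → E) : ℕ → ℕ → E → E
  | _, 0 => id
  | i, (k + 1) => h i ∘ compSeq h (i + 1) k

variable {E : Type*} [NormedAddCommGroup E] [NormedSpace ℝ E]
  {h : ℕ → E → E} {Y : Set E} {i k : ℕ}

omit [NormedAddCommGroup E] [NormedSpace ℝ E] in
lemma compSeq_mapsTo (H : ∀ j, i ≤ j → j < i + k → Set.MapsTo (h j) Y Y) :
    Set.MapsTo (compSeq h i k) Y Y := by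
  induction k generalizing i with
  | zero => exact Set.mapsTo_id Y
  | succ k ih =>
    exact (H i le_rfl (by omega)).comp (ih fun j h1 h2 => H j (by omega) (by omega))

lemma compSeq_diffOn (Hm : ∀ j, i ≤ j → j < i + k → Set.MapsTo (h j) Y Y)
    (Hd : ∀ j, i ≤ j → j < i + k → DifferentiableOn ℝ (h j) Y) :
    DifferentiableOn ℝ (compSeq h i k) Y := by
  induction k generalizing i with
  | zero => exact differentiableOn_id
  | succ k ih =>
    exact DifferentiableOn.comp (Hd i le_rfl (by omega))
      (ih (fun j h1 h2 => Hm j (by omega) (by omega))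
        (fun j h1 h2 => Hd j (by omega) (by omega)))
      (compSeq_mapsTo fun j h1 h2 => Hm j (by omega) (by omega))

lemma compSeq_det (hYopen : IsOpen Y)
    (Hm : ∀ j, i ≤ j → j < i + k → Set.MapsTo (h j) Y Y)
    (Hd : ∀ j, i ≤ j → j < i + k → DifferentiableOn ℝ (h j) Y)
    {x : E} (hx : x ∈ Y) :
    (fderivWithin ℝ (compSeq h i k) Y x).det =
      ∏ j ∈ Finset.range k,
        (fderivWithin ℝ (h (i + j)) Y (compSeq h (i + j + 1) (k - 1 - j) x)).det := by
  induction k generalizing i with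
  | zero =>
    simp [compSeq, fderivWithin_id (hYopen.uniqueDiffOn x hx), ContinuousLinearMap.det,
      ContinuousLinearMap.coe_id]
  | succ k ih =>
    have hmem : compSeq h (i + 1) k x ∈ Y :=
      compSeq_mapsTo (fun j h1 h2 => Hm j (by omega) (by omega)) hx
    have hcomp : fderivWithin ℝ (compSeq h i (k + 1)) Y x =
        (fderivWithin ℝ (h i) Y (compSeq h (i + 1) k x)).comp
          (fderivWithin ℝ (compSeq h (i + 1) k) Y x) := by
      exact fderivWithin_comp (x := x)
        ((Hd i le_rfl (by omega)) _ hmem)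
        ((compSeq_diffOn (fun j h1 h2 => Hm j (by omega) (by omega))
          (fun j h1 h2 => Hd j (by omega) (by omega))) x hx)
        (compSeq_mapsTo (fun j h1 h2 => Hm j (by omega) (by omega)))
        (hYopen.uniqueDiffOn x hx)
    rw [hcomp]
    have : ((fderivWithin ℝ (h i) Y (compSeq h (i + 1) k x)).comp
          (fderivWithin ℝ (compSeq h (i + 1) k) Y x)).det =
        (fderivWithin ℝ (h i) Y (compSeq h (i + 1) k x)).det *
          (fderivWithin ℝ (compSeq h (i + 1) k) Y x).det := by
      simp [ContinuousLinearMap.det, ContinuousLinearMap.coe_comp]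
    rw [this, ih (fun j h1 h2 => Hm j (by omega) (by omega))
      (fun j h1 h2 => Hd j (by omega) (by omega)), Finset.prod_range_succ']
    rw [mul_comm]
    congr 1
    · apply Finset.prod_congr rfl
      intro j hj
      have e1 : i + (j + 1) = i + 1 + j := by omega
      have e2 : k + 1 - 1 - (j + 1) = k - 1 - j := by omega
      rw [e1, e2]


lemma det_dichotomy [FiniteDimensional ℝ E] (hYopen : IsOpen Y) (hYconv : Convex ℝ Y)
    {f : E → E} (hf : ContDiffOn ℝ 1 f Y) {C α : ℝ} (hα : 0 < α) (hα1 : α ≤ 1)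
    (hd : ∀ x ∈ Y, ∀ y ∈ Y,
      |Real.log (abs (fderivWithin ℝ f Y x).det) - Real.log (abs (fderivWithin ℝ f Y y).det)| ≤
        C * dist x y ^ α) :
    (∀ x ∈ Y, (fderivWithin ℝ f Y x).det ≠ 0) ∨ (∀ x ∈ Y, (fderivWithin ℝ f Y x).det = 0) := by
  set g : E → ℝ := fun x => (fderivWithin ℝ f Y x).det with hg
  have hgc : ContinuousOn g Y :=
    ContinuousLinearMap.continuous_det.comp_continuousOn
      (hf.continuousOn_fderivWithin hYopen.uniqueDiffOn le_rfl)
  set U : Set E := Y ∩ g ⁻¹' ({0}ᶜ) with hU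
  set V : Set E := interior {x | g x = 0} with hV
  have hUopen : IsOpen U := hgc.isOpen_inter_preimage hYopen isOpen_compl_singleton
  have key : ∀ x ∈ Y, g x = 0 → x ∈ V := by
    intro x hx h0
    obtain ⟨r, hr0, hrY⟩ := Metric.isOpen_iff.1 hYopen x hx
    have hca : ContinuousAt g x := (hgc x hx).continuousAt (hYopen.mem_nhds hx)
    obtain ⟨r', hr'0, hr'⟩ := Metric.continuousAt_iff.1 hca (Real.exp (-|C|)) (Real.exp_pos _)
    rw [hV, mem_interior]
    refine ⟨Metric.ball x (min 1 (min r r')), ?_, Metric.isOpen_ball,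
      Metric.mem_ball_self (by positivity)⟩
    intro y hy
    simp only [Metric.mem_ball, lt_min_iff] at hy
    have hyY : y ∈ Y := hrY (Metric.mem_ball.2 hy.2.1)
    show g y = 0
    by_contra hgy
    have hsmall : |g y| < Real.exp (-|C|) := by
      have h2 := hr' hy.2.2
      rwa [h0, dist_zero_right, Real.norm_eq_abs] at h2
    have hlog : |Real.log (abs (g y))| ≤ |C| := by
      have h1 : |Real.log (abs (g x)) - Real.log (abs (g y))| ≤ C * dist x y ^ α :=
        hd x hx y hyY
      rw [h0, abs_zero, Real.log_zero, zero_sub, abs_neg] at h1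
      refine h1.trans ?_
      have hd1 : dist x y ^ α ≤ 1 :=
        Real.rpow_le_one dist_nonneg (by rw [dist_comm]; exact hy.1.le) hα.le
      calc C * dist x y ^ α ≤ |C| * 1 :=
            mul_le_mul (le_abs_self C) hd1 (Real.rpow_nonneg dist_nonneg α) (abs_nonneg C)
        _ = |C| := mul_one _
    have hge : Real.exp (-|C|) ≤ |g y| := by
      have hcc : -|C| ≤ Real.log |g y| := neg_le_of_abs_le hlog
      calc Real.exp (-|C|) ≤ Real.exp (Real.log |g y|) := Real.exp_le_exp.2 hcc
        _ = |g y| := Real.exp_log (abs_pos.2 hgy)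
    exact absurd hsmall (not_lt.2 hge)
  have hdisj : Disjoint U V := by
    rw [Set.disjoint_left]
    intro a haU haV
    exact haU.2 (interior_subset (s := {x | g x = 0}) haV)
  have hsub : Y ⊆ U ∪ V := by
    intro x hx
    by_cases h0 : g x = 0
    · exact Or.inr (key x hx h0)
    · exact Or.inl ⟨hx, h0⟩
  rcases hYconv.isPreconnected.subset_or_subset hUopen isOpen_interior hdisj hsub with H | H
  · exact Or.inl fun x hx => (H hx).2
  · exact Or.inr fun x hx => interior_subset (s := {x | g x = 0}) (H hx)

/-- Condition (ii₁) of Section 3.1: if each composition `h_i ∘ ⋯ ∘ h_n`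
contracts with rate `C₁ ρ₀^{n-i+1}` and each branch satisfies the distortion
bound `|log |det Dh_i||_α ≤ C₁`, then the full composition `h = h₁ ∘ ⋯ ∘ h_n`
satisfies `|log |det Dh||_α ≤ C₁²/(1 - ρ₀^α)`.  (Branches are indexed here by
`0, …, n-1`, so `compSeq h i (n-i)` is the composition of the last `n - i`
branches.) -/
theorem stmt9 {m : ℕ} (Y : Set (EuclideanSpace ℝ (Fin m)))
    (hYopen : IsOpen Y) (hYconv : Convex ℝ Y)
    (α : ℝ) (hα : α ∈ Set.Ioc (0 : ℝ) 1)
    (C₁ : ℝ) (hC₁ : 1 ≤ C₁)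
    (ρ₀ : ℝ) (hρ₀ : ρ₀ ∈ Set.Ioo (0 : ℝ) 1)
    (n : ℕ) (hn : 1 ≤ n)
    (h : ℕ → EuclideanSpace ℝ (Fin m) → EuclideanSpace ℝ (Fin m))
    (hmaps : ∀ i < n, Set.MapsTo (h i) Y Y)
    (hsmooth : ∀ i < n, ContDiffOn ℝ 1 (h i) Y)
    (hcontract : ∀ i < n, ∀ y ∈ Y,
      ‖fderivWithin ℝ (compSeq h i (n - i)) Y y‖ ≤ C₁ * ρ₀ ^ (n - i))
    (hdist : ∀ i < n, ∀ x ∈ Y, ∀ y ∈ Y,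
      |Real.log (abs (fderivWithin ℝ (h i) Y x).det) -
        Real.log (abs (fderivWithin ℝ (h i) Y y).det)| ≤ C₁ * dist x y ^ α) :
    ∀ x ∈ Y, ∀ y ∈ Y,
      |Real.log (abs (fderivWithin ℝ (compSeq h 0 n) Y x).det) -
        Real.log (abs (fderivWithin ℝ (compSeq h 0 n) Y y).det)| ≤
        (C₁ ^ 2 / (1 - ρ₀ ^ α)) * dist x y ^ α := by
  intro x hx y hy
  have hρα : ρ₀ ^ α < 1 := Real.rpow_lt_one hρ₀.1.le hρ₀.2 hα.1
  have hραpos : 0 < ρ₀ ^ α := Real.rpow_pos_of_pos hρ₀.1 α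
  have hone : 0 < 1 - ρ₀ ^ α := by linarith
  have hC₁0 : (0:ℝ) < C₁ := by linarith
  have hRHSnn : 0 ≤ (C₁ ^ 2 / (1 - ρ₀ ^ α)) * dist x y ^ α := by positivity
  have Hm' : ∀ j, 0 ≤ j → j < 0 + n → Set.MapsTo (h j) Y Y :=
    fun j _ hj => hmaps j (by omega)
  have Hd' : ∀ j, 0 ≤ j → j < 0 + n → DifferentiableOn ℝ (h j) Y :=
    fun j _ hj => (hsmooth j (by omega)).differentiableOn one_ne_zero
  set p : ℕ → EuclideanSpace ℝ (Fin m) → EuclideanSpace ℝ (Fin m) :=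
    fun j z => compSeq h (j + 1) (n - 1 - j) z with hp
  have hpY : ∀ j < n, ∀ z ∈ Y, p j z ∈ Y := fun j hj z hz =>
    compSeq_mapsTo (fun l h1 h2 => hmaps l (by omega)) hz
  by_cases hz : ∀ i < n, ∀ z ∈ Y, (fderivWithin ℝ (h i) Y z).det ≠ 0
  · -- all determinants nonvanishing
    have hlogprod : ∀ z ∈ Y, Real.log (abs (fderivWithin ℝ (compSeq h 0 n) Y z).det)
        = ∑ j ∈ Finset.range n,
            Real.log (abs (fderivWithin ℝ (h j) Y (p j z)).det) := by
      intro z hz'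
      rw [compSeq_det hYopen Hm' Hd' hz', Finset.abs_prod, Real.log_prod]
      · refine Finset.sum_congr rfl fun j hj => ?_
        simp only [zero_add]
        rfl
      · intro j hj
        simp only [Finset.mem_range] at hj
        simp only [zero_add]
        exact abs_ne_zero.2 (hz j hj _ (hpY j hj z hz'))
    have hptdist : ∀ j < n,
        dist (p j x) (p j y) ≤ C₁ * ρ₀ ^ (n - 1 - j) * dist x y := by
      intro j hj
      rcases eq_or_lt_of_le (Nat.succ_le_of_lt hj) with he | hlt
      · have e0 : n - 1 - j = 0 := by omega
        have : p j x = x ∧ p j y = y := by constructor <;> simp [hp, e0, compSeq]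
        rw [this.1, this.2, e0, pow_zero, mul_one]
        nlinarith [dist_nonneg (x := x) (y := y)]
      · have e : n - (j + 1) = n - 1 - j := by omega
        have hdiffc : DifferentiableOn ℝ (compSeq h (j + 1) (n - 1 - j)) Y :=
          compSeq_diffOn (fun l h1 h2 => hmaps l (by omega))
            (fun l h1 h2 => (hsmooth l (by omega)).differentiableOn one_ne_zero)
        have hb := hcontract (j + 1) hlt
        rw [e] at hb
        have hmv := hYconv.norm_image_sub_le_of_norm_fderivWithin_le hdiffc
          (fun z hz' => hb z hz') hy hx
        rw [dist_eq_norm]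
        calc ‖p j x - p j y‖ ≤ C₁ * ρ₀ ^ (n - 1 - j) * ‖x - y‖ := hmv
          _ = C₁ * ρ₀ ^ (n - 1 - j) * dist x y := by rw [dist_eq_norm]
    have hCα : C₁ ^ α ≤ C₁ := by
      calc C₁ ^ α ≤ C₁ ^ (1 : ℝ) := Real.rpow_le_rpow_of_exponent_le hC₁ hα.2
        _ = C₁ := Real.rpow_one C₁
    calc |Real.log (abs (fderivWithin ℝ (compSeq h 0 n) Y x).det) -
          Real.log (abs (fderivWithin ℝ (compSeq h 0 n) Y y).det)|
        = |∑ j ∈ Finset.range n,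
            (Real.log (abs (fderivWithin ℝ (h j) Y (p j x)).det) -
             Real.log (abs (fderivWithin ℝ (h j) Y (p j y)).det))| := by
          rw [hlogprod x hx, hlogprod y hy, ← Finset.sum_sub_distrib]
      _ ≤ ∑ j ∈ Finset.range n,
            |Real.log (abs (fderivWithin ℝ (h j) Y (p j x)).det) -
             Real.log (abs (fderivWithin ℝ (h j) Y (p j y)).det)| :=
          Finset.abs_sum_le_sum_abs _ _
      _ ≤ ∑ j ∈ Finset.range n,
            (C₁ * C₁ ^ α * dist x y ^ α) * (ρ₀ ^ α) ^ (n - 1 - j) := by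
          refine Finset.sum_le_sum fun j hj => ?_
          simp only [Finset.mem_range] at hj
          have h1 := hdist j hj (p j x) (hpY j hj x hx) (p j y) (hpY j hj y hy)
          have h2 : dist (p j x) (p j y) ^ α ≤ (C₁ * ρ₀ ^ (n - 1 - j) * dist x y) ^ α :=
            Real.rpow_le_rpow dist_nonneg (hptdist j hj) hα.1.le
          have h3 : (C₁ * ρ₀ ^ (n - 1 - j) * dist x y) ^ α
              = C₁ ^ α * (ρ₀ ^ α) ^ (n - 1 - j) * dist x y ^ α := by
            rw [Real.mul_rpow (mul_nonneg hC₁0.le (pow_nonneg hρ₀.1.le _)) dist_nonneg,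
              Real.mul_rpow hC₁0.le (pow_nonneg hρ₀.1.le _)]
            congr 1
            congr 1
            rw [← Real.rpow_natCast ρ₀ (n - 1 - j), ← Real.rpow_natCast (ρ₀ ^ α) (n - 1 - j),
              ← Real.rpow_mul hρ₀.1.le, ← Real.rpow_mul hρ₀.1.le, mul_comm]
          calc |Real.log (abs (fderivWithin ℝ (h j) Y (p j x)).det) -
                Real.log (abs (fderivWithin ℝ (h j) Y (p j y)).det)|
              ≤ C₁ * dist (p j x) (p j y) ^ α := h1
            _ ≤ C₁ * (C₁ * ρ₀ ^ (n - 1 - j) * dist x y) ^ α :=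
                mul_le_mul_of_nonneg_left h2 hC₁0.le
            _ = (C₁ * C₁ ^ α * dist x y ^ α) * (ρ₀ ^ α) ^ (n - 1 - j) := by
                rw [h3]; ring
      _ = (C₁ * C₁ ^ α * dist x y ^ α) * ∑ j ∈ Finset.range n, (ρ₀ ^ α) ^ (n - 1 - j) := by
          rw [← Finset.mul_sum]
      _ = (C₁ * C₁ ^ α * dist x y ^ α) * ∑ j ∈ Finset.range n, (ρ₀ ^ α) ^ j := by
          rw [Finset.sum_range_reflect]
      _ ≤ (C₁ * C₁ ^ α * dist x y ^ α) * (1 - ρ₀ ^ α)⁻¹ := by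
          refine mul_le_mul_of_nonneg_left ?_
            (mul_nonneg (mul_nonneg hC₁0.le (Real.rpow_nonneg hC₁0.le α))
              (Real.rpow_nonneg dist_nonneg α))
          exact sum_le_hasSum _ (fun i _ => pow_nonneg hραpos.le i)
            (hasSum_geometric_of_lt_one hραpos.le hρα)
      _ ≤ (C₁ ^ 2 / (1 - ρ₀ ^ α)) * dist x y ^ α := by
          rw [div_eq_mul_inv, pow_two]
          have h4 : C₁ * C₁ ^ α ≤ C₁ * C₁ := mul_le_mul_of_nonneg_left hCα hC₁0.le
          calc (C₁ * C₁ ^ α * dist x y ^ α) * (1 - ρ₀ ^ α)⁻¹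
              = (C₁ * C₁ ^ α) * (dist x y ^ α * (1 - ρ₀ ^ α)⁻¹) := by ring
            _ ≤ (C₁ * C₁) * (dist x y ^ α * (1 - ρ₀ ^ α)⁻¹) :=
                mul_le_mul_of_nonneg_right h4
                  (mul_nonneg (Real.rpow_nonneg dist_nonneg α) (by positivity))
            _ = C₁ * C₁ * (1 - ρ₀ ^ α)⁻¹ * dist x y ^ α := by ring
  · -- some determinant vanishes: it vanishes identically, so both logs are zero
    push_neg at hz
    obtain ⟨i, hi, z, hzY, hz0⟩ := hz
    rcases det_dichotomy hYopen hYconv (hsmooth i hi) hα.1 hα.2 (hdist i hi) with H | H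
    · exact absurd hz0 (H z hzY)
    · have hzero : ∀ w ∈ Y, (fderivWithin ℝ (compSeq h 0 n) Y w).det = 0 := by
        intro w hw
        rw [compSeq_det hYopen Hm' Hd' hw]
        refine Finset.prod_eq_zero (Finset.mem_range.2 hi) ?_
        simp only [zero_add]
        exact H _ (hpY i hi w hw)
      rw [hzero x hx, hzero y hy]
      simpa using hRHSnn
end

section
/- Let (Y, d) be a metric space, let 𝒫 be a collection of pairwise disjoint subsets of Y with union D = ⋃_{U∈𝒫} U, and let f : D → Y be a map. Let ξ : Y → ℝ be uniformly continuous, let ζ : D → ℝ be constant on each element of 𝒫, and define r : D → ℝ by r = ξ∘f − ξ + ζ. Let x, x' ∈ Y and let (z_j)_{j≥0}, (z_j')_{j≥0} be sequences with z₀ = x, z₀' = x', such that for every j ≥ 1: z_j, z_j' ∈ D, f(z_j) = z_{j−1}, f(z_j') = z_{j−1}', and z_j and z_j' lie in the same element of 𝒫. If d(z_j, z_j') → 0 as j → ∞, then the series Σ_{j=1}^{∞} (r(z_j) − r(z_j')) converges and equals ξ(x) − ξ(x'). -/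
open Filter

/-- The telescoping argument in the proof of Lemma 4.4: if `r = ξ∘f - ξ + ζ`
on `D = ⋃ 𝒫` with `ξ` uniformly continuous and `ζ` constant on elements of the
pairwise disjoint collection `𝒫`, and if `(z_j), (z_j')` are backward orbits of
`x, x'` under `f` staying in common partition elements with `d(z_j, z_j') → 0`,
then `Σ_{j≥1} (r(z_j) - r(z_j'))` converges to `ξ(x) - ξ(x')`. -/
theorem stmt11 {Y : Type*} [MetricSpace Y] (P : Set (Set Y))
    (hPdisj : P.Pairwise (Disjoint · ·))
    (f : Y → Y) (ξ : Y → ℝ) (hξ : UniformContinuous ξ)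
    (ζ : Y → ℝ) (hζ : ∀ U ∈ P, ∀ x ∈ U, ∀ y ∈ U, ζ x = ζ y)
    (r : Y → ℝ) (hr : ∀ x ∈ ⋃ U ∈ P, U, r x = ξ (f x) - ξ x + ζ x)
    (x x' : Y) (z z' : ℕ → Y) (hz0 : z 0 = x) (hz0' : z' 0 = x')
    (hstep : ∀ j : ℕ, f (z (j + 1)) = z j ∧ f (z' (j + 1)) = z' j ∧
      ∃ U ∈ P, z (j + 1) ∈ U ∧ z' (j + 1) ∈ U)
    (hdist : Tendsto (fun j => dist (z j) (z' j)) atTop (nhds 0)) :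
    Tendsto (fun N => ∑ j ∈ Finset.range N, (r (z (j + 1)) - r (z' (j + 1))))
      atTop (nhds (ξ x - ξ x')) := by
  -- term identity
  have hterm : ∀ j : ℕ, r (z (j + 1)) - r (z' (j + 1))
      = (ξ (z j) - ξ (z' j)) - (ξ (z (j + 1)) - ξ (z' (j + 1))) := by
    intro j
    obtain ⟨h1, h2, U, hU, hzU, hz'U⟩ := hstep j
    have hzD : z (j + 1) ∈ ⋃ U ∈ P, U := Set.mem_biUnion hU hzU
    have hz'D : z' (j + 1) ∈ ⋃ U ∈ P, U := Set.mem_biUnion hU hz'U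
    have hζeq : ζ (z (j + 1)) = ζ (z' (j + 1)) := hζ U hU _ hzU _ hz'U
    rw [hr _ hzD, hr _ hz'D, h1, h2, hζeq]
    ring
  -- telescoping
  have hsum : ∀ N : ℕ, ∑ j ∈ Finset.range N, (r (z (j + 1)) - r (z' (j + 1)))
      = (ξ x - ξ x') - (ξ (z N) - ξ (z' N)) := by
    intro N
    have : ∑ j ∈ Finset.range N, (r (z (j + 1)) - r (z' (j + 1)))
        = ∑ j ∈ Finset.range N,
            ((fun k => ξ (z k) - ξ (z' k)) j - (fun k => ξ (z k) - ξ (z' k)) (j + 1)) := by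
      refine Finset.sum_congr rfl fun j _ => ?_
      simpa using hterm j
    rw [this, Finset.sum_range_sub' (fun k => ξ (z k) - ξ (z' k)) N]
    simp [hz0, hz0']
  simp only [hsum]
  -- tail tends to 0
  have h0 : Tendsto (fun j => dist (ξ (z j)) (ξ (z' j))) atTop (nhds 0) := by
    have h1 : Tendsto (fun j => (z j, z' j)) atTop (uniformity Y) :=
      (tendsto_uniformity_iff_dist_tendsto_zero).2 hdist
    have h2 : Tendsto (fun j => (ξ (z j), ξ (z' j))) atTop (uniformity ℝ) :=
      Filter.Tendsto.comp hξ h1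
    exact (tendsto_uniformity_iff_dist_tendsto_zero).1 h2
  have h3 : Tendsto (fun j => ξ (z j) - ξ (z' j)) atTop (nhds 0) := by
    rw [tendsto_iff_dist_tendsto_zero]
    simpa [Real.dist_eq] using h0
  simpa using tendsto_const_nhds.sub h3
end

section
/- Let Y ⊂ ℝ^m be an open ball of diameter 1, α ∈ (0,1], C₁ ≥ 1, ρ₀ ∈ (0,1), r₀ > 0, ε₀ > 0. Let (h_i)_{i∈I} be a countable family of injective C¹ maps h_i : Y → Y with pairwise disjoint images such that: sup_{y} ‖Dh_i(y)‖ ≤ C₁ρ₀ for each i; |log|det Dh_i||_α ≤ C₁ for each i; and let (r_i)_{i∈I} be C¹ functions r_i : Y → ℝ with r_i ≥ r₀, sup_y ‖Dr_i(y)‖ ≤ C₁, and Σ_{i∈I} e^{ε₀·sup_Y r_i} · sup_Y |det Dh_i| < ∞. For s = σ + ib ∈ ℂ and bounded α-Hölder v : Y → ℂ define (P_s v)(y) = Σ_{i∈I} e^{−s·r_i(y)} |det Dh_i(y)| v(h_i(y)). Then there exist ε ∈ (0, ε₀] and C > 0, depending only on m, α, C₁, ρ₀, r₀, ε₀ and the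 value of the convergent sum, such that for every s = σ + ib with |σ| ≤ ε and every bounded α-Hölder v : Y → ℂ: the series defining P_s v converges absolutely and uniformly on Y, P_s v is bounded and α-Hölder, and ‖P_s v‖_b ≤ C·‖v‖_b. -/
open MeasureTheory Filter

lemma aux_abs_exp_sub_one (t : ℝ) : |Real.exp t - 1| ≤ |t| * Real.exp |t| := by
  rcases le_or_gt 0 t with ht | ht
  · have h1 : -t + 1 ≤ Real.exp (-t) := Real.add_one_le_exp (-t)
    have h2 : Real.exp (-t) * Real.exp t = 1 := by
      rw [← Real.exp_add]; simp
    have h3 : (0:ℝ) < Real.exp t := Real.exp_pos t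
    have h4 : 1 ≤ Real.exp t := Real.one_le_exp ht
    rw [abs_of_nonneg ht, abs_of_nonneg (by linarith)]
    nlinarith
  · have h1 : t + 1 ≤ Real.exp t := Real.add_one_le_exp t
    have h4 : Real.exp t ≤ 1 := by
      have := Real.exp_le_exp.mpr ht.le
      simpa using this
    have h5 : 1 ≤ Real.exp |t| := Real.one_le_exp (abs_nonneg t)
    have h6 : 1 ≤ Real.exp (-t) := Real.one_le_exp (by linarith)
    rw [abs_of_neg ht, abs_of_nonpos (by linarith)]
    nlinarith

lemma aux_cexp_sub_one {α : ℝ} (hα0 : 0 < α) (hα1 : α ≤ 1) {cb : ℝ} (hcb : 0 ≤ cb)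
    {z : ℂ} (hre : |z.re| ≤ cb) :
    ‖Complex.exp z - 1‖ ≤ (3 + Real.exp cb) * ‖z‖ ^ α := by
  have hecb : (0:ℝ) < Real.exp cb := Real.exp_pos cb
  rcases le_or_gt (‖z‖) 1 with hz | hz
  · have h2 : ‖Complex.exp z - 1‖ ≤ 2 * ‖z‖ :=
      Complex.norm_exp_sub_one_le hz
    rcases eq_or_lt_of_le (norm_nonneg z) with h0 | h0
    · have hz0 : z = 0 := by
        have := norm_eq_zero.mp h0.symm; exact this
      simp [hz0, Real.zero_rpow (ne_of_gt hα0)]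
    · have h3 : ‖z‖ ≤ ‖z‖ ^ α := by
        have := Real.rpow_le_rpow_of_exponent_ge h0 hz hα1
        simpa using this
      have h4 : (0:ℝ) ≤ ‖z‖ ^ α := Real.rpow_nonneg (norm_nonneg z) α
      nlinarith
  · have h1 : (1:ℝ) ≤ ‖z‖ ^ α := by
      calc (1:ℝ) = 1 ^ α := (Real.one_rpow α).symm
      _ ≤ ‖z‖ ^ α := Real.rpow_le_rpow (by norm_num) hz.le hα0.le
    have h2 : ‖Complex.exp z - 1‖ ≤ Real.exp cb + 1 := by
      calc ‖Complex.exp z - 1‖ ≤ ‖Complex.exp z‖ + 1 := by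
            simpa using norm_sub_le (Complex.exp z) 1
      _ ≤ Real.exp cb + 1 := by
            rw [Complex.norm_exp]
            have : z.re ≤ cb := le_trans (le_abs_self _) hre
            linarith [Real.exp_le_exp.mpr this]
    nlinarith

lemma aux_rpow_add {x y : ℝ} (hx : 0 ≤ x) (hy : 0 ≤ y) {p : ℝ} (hp : 0 ≤ p) (hp1 : p ≤ 1) :
    (x + y) ^ p ≤ x ^ p + y ^ p := by
  lift x to NNReal using hx
  lift y to NNReal using hy
  have := NNReal.rpow_add_le_add_rpow x y hp hp1
  exact_mod_cast this

lemma aux_rpow_le_one_add {x p : ℝ} (hx : 0 ≤ x) (hp0 : 0 ≤ p) (hp1 : p ≤ 1) :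
    x ^ p ≤ 1 + x := by
  rcases le_or_gt x 1 with h | h
  · have := Real.rpow_le_one hx h hp0
    linarith
  · have : x ^ p ≤ x ^ (1:ℝ) := Real.rpow_le_rpow_of_exponent_le h.le hp1
    rw [Real.rpow_one] at this
    linarith

lemma aux_le_biSup {E : Type*} {Y : Set E} {f : E → ℝ} {K : ℝ}
    (hK : ∀ y ∈ Y, f y ≤ K) (hK0 : 0 ≤ K) {y : E} (hy : y ∈ Y) :
    f y ≤ ⨆ y ∈ Y, f y := by
  have hbdd : BddAbove (Set.range fun z => ⨆ _ : z ∈ Y, f z) := by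
    refine ⟨K, ?_⟩
    rintro - ⟨z, rfl⟩
    by_cases hz : z ∈ Y
    · show (⨆ _ : z ∈ Y, f z) ≤ K
      rw [ciSup_pos (f := fun _ => f z) hz]; exact hK z hz
    · show (⨆ _ : z ∈ Y, f z) ≤ K
      rw [ciSup_neg (f := fun _ => f z) hz]
      simpa [Real.sSup_empty] using hK0
  calc f y = ⨆ _ : y ∈ Y, f y := (ciSup_pos (f := fun _ => f y) hy).symm
  _ ≤ ⨆ z ∈ Y, f z := le_ciSup hbdd y


/-- The (non-normalised) twisted transfer operator
`(P_s v)(y) = Σ_i e^{-s r_i(y)} |det Dh_i(y)| v(h_i(y))`,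
where the Jacobians are computed as derivatives within `Y`. -/
noncomputable def transferOp {E : Type*} [NormedAddCommGroup E] [NormedSpace ℝ E]
    {I : Type*} (Y : Set E) (h : I → E → E) (r : I → E → ℝ) (s : ℂ) (v : E → ℂ) :
    E → ℂ :=
  fun y => ∑' i, Complex.exp (-s * (r i y : ℂ)) *
    ((|(fderivWithin ℝ (h i) Y y).det| : ℝ) : ℂ) * v (h i y)

set_option maxHeartbeats 2000000 in
/-- Proposition 3.2 (uniform boundedness): for inverse branches `h_i` and roof
functions `r_i` satisfying conditions (i)-(iv), there are `ε ∈ (0, ε₀]` and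
`C > 0` such that for all `s = σ + ib` with `|σ| ≤ ε` and all bounded α-Hölder
`v`, the series defining `P_s v` converges absolutely and uniformly on `Y`,
and `‖P_s v‖_b ≤ C ‖v‖_b`, where `‖v‖_b = max(|v|_∞, |v|_α/(1+|b|^α))`.
(The norm bound is expressed via arbitrary Hölder data `(Vinf, Vα)` for `v`.) -/
theorem stmt12 {m : ℕ} (hm : 1 ≤ m) {I : Type*} [Countable I]
    (c : EuclideanSpace ℝ (Fin m))
    (Y : Set (EuclideanSpace ℝ (Fin m))) (hY : Y = Metric.ball c (1 / 2))
    (α : ℝ) (hα : α ∈ Set.Ioc (0 : ℝ) 1)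
    (C₁ : ℝ) (hC₁ : 1 ≤ C₁)
    (ρ₀ : ℝ) (hρ₀ : ρ₀ ∈ Set.Ioo (0 : ℝ) 1)
    (r₀ : ℝ) (hr₀ : 0 < r₀) (ε₀ : ℝ) (hε₀ : 0 < ε₀)
    (h : I → EuclideanSpace ℝ (Fin m) → EuclideanSpace ℝ (Fin m))
    (r : I → EuclideanSpace ℝ (Fin m) → ℝ)
    (hinj : ∀ i, Set.InjOn (h i) Y)
    (hmaps : ∀ i, Set.MapsTo (h i) Y Y)
    (hdisj : Pairwise fun i j => Disjoint (h i '' Y) (h j '' Y))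
    (hsmooth : ∀ i, ContDiffOn ℝ 1 (h i) Y)
    (hDh : ∀ i, ∀ y ∈ Y, ‖fderivWithin ℝ (h i) Y y‖ ≤ C₁ * ρ₀)
    (hdet : ∀ i, ∀ x ∈ Y, ∀ y ∈ Y,
      |Real.log (abs (fderivWithin ℝ (h i) Y x).det) -
        Real.log (abs (fderivWithin ℝ (h i) Y y).det)| ≤ C₁ * dist x y ^ α)
    (hrsmooth : ∀ i, ContDiffOn ℝ 1 (r i) Y)
    (hrlb : ∀ i, ∀ y ∈ Y, r₀ ≤ r i y)
    (hDr : ∀ i, ∀ y ∈ Y, ‖fderivWithin ℝ (r i) Y y‖ ≤ C₁)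
    (hsum : Summable fun i =>
      Real.exp (ε₀ * ⨆ y ∈ Y, r i y) * ⨆ y ∈ Y, |(fderivWithin ℝ (h i) Y y).det|) :
    ∃ ε ∈ Set.Ioc (0 : ℝ) ε₀, ∃ C > (0 : ℝ),
      ∀ s : ℂ, |s.re| ≤ ε →
      ∀ v : EuclideanSpace ℝ (Fin m) → ℂ, ∀ Vinf Vα : ℝ,
      (∀ y ∈ Y, ‖v y‖ ≤ Vinf) →
      (∀ x ∈ Y, ∀ y ∈ Y, ‖v x - v y‖ ≤ Vα * dist x y ^ α) →
      (∀ y ∈ Y, Summable fun i =>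
        ‖Complex.exp (-s * (r i y : ℂ)) *
          ((|(fderivWithin ℝ (h i) Y y).det| : ℝ) : ℂ) * v (h i y)‖) ∧
      TendstoUniformlyOn
        (fun (t : Finset I) y => ∑ i ∈ t, Complex.exp (-s * (r i y : ℂ)) *
          ((|(fderivWithin ℝ (h i) Y y).det| : ℝ) : ℂ) * v (h i y))
        (transferOp Y h r s v) atTop Y ∧
      (∀ y ∈ Y, ‖transferOp Y h r s v y‖ ≤
        C * max Vinf (Vα / (1 + |s.im| ^ α))) ∧
      (∀ x ∈ Y, ∀ y ∈ Y,
        ‖transferOp Y h r s v x - transferOp Y h r s v y‖ ≤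
          C * max Vinf (Vα / (1 + |s.im| ^ α)) * (1 + |s.im| ^ α) * dist x y ^ α) := by
  classical
  obtain ⟨hα0, hα1⟩ := hα
  obtain ⟨hρ0, hρ1⟩ := hρ₀
  have hcY : c ∈ Y := by rw [hY]; exact Metric.mem_ball_self (by norm_num)
  have hd1 : ∀ x ∈ Y, ∀ y ∈ Y, dist x y < 1 := by
    intro x hx y hy
    rw [hY] at hx hy
    have h1 : dist x c < 1/2 := Metric.mem_ball.mp hx
    have h2 : dist y c < 1/2 := Metric.mem_ball.mp hy
    calc dist x y ≤ dist x c + dist c y := dist_triangle x c y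
    _ < 1 := by rw [dist_comm c y]; linarith
  have hdα1 : ∀ x ∈ Y, ∀ y ∈ Y, dist x y ^ α ≤ 1 := fun x hx y hy =>
    Real.rpow_le_one dist_nonneg (hd1 x hx y hy).le hα0.le
  have hconv : Convex ℝ Y := hY ▸ convex_ball c (1/2)
  have hopen : IsOpen Y := hY ▸ Metric.isOpen_ball
  have hud : UniqueDiffOn ℝ Y := hopen.uniqueDiffOn
  -- Lipschitz estimates from the mean value theorem
  have hrdiff : ∀ i, ∀ x ∈ Y, ∀ y ∈ Y, |r i x - r i y| ≤ C₁ * dist x y := by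
    intro i x hx y hy
    have := hconv.norm_image_sub_le_of_norm_fderivWithin_le
      ((hrsmooth i).differentiableOn one_ne_zero) (hDr i) hy hx
    simpa [Real.norm_eq_abs, dist_eq_norm] using this
  have hhd : ∀ i, ∀ x ∈ Y, ∀ y ∈ Y, dist (h i x) (h i y) ≤ C₁ * dist x y := by
    intro i x hx y hy
    have h1 := hconv.norm_image_sub_le_of_norm_fderivWithin_le
      ((hsmooth i).differentiableOn one_ne_zero) (hDh i) hy hx
    rw [← dist_eq_norm, ← dist_eq_norm] at h1
    calc dist (h i x) (h i y) ≤ C₁ * ρ₀ * dist x y := h1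
    _ ≤ C₁ * dist x y := by
        nlinarith [mul_nonneg (mul_nonneg (by linarith : (0:ℝ) ≤ C₁)
          (dist_nonneg (x := x) (y := y))) (by linarith : (0:ℝ) ≤ 1 - ρ₀)]
  -- suprema
  obtain ⟨Rf, hRf⟩ : ∃ Rf : I → ℝ, ∀ i, Rf i = ⨆ y ∈ Y, r i y := ⟨_, fun _ => rfl⟩
  obtain ⟨Sf, hSf⟩ : ∃ Sf : I → ℝ, ∀ i, Sf i = ⨆ y ∈ Y,
      |(fderivWithin ℝ (h i) Y y).det| := ⟨_, fun _ => rfl⟩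
  have hMsum : Summable (fun i => Real.exp (ε₀ * Rf i) * Sf i) := by
    simp only [hRf, hSf]; exact hsum
  have hRle : ∀ i, ∀ y ∈ Y, r i y ≤ Rf i := by
    intro i y hy
    rw [hRf]
    refine aux_le_biSup (f := fun z => r i z) (K := r i c + C₁) ?_ (by nlinarith [hrlb i c hcY]) hy
    intro z hz
    have h1 := hrdiff i z hz c hcY
    have h2 := hd1 z hz c hcY
    have := (abs_le.mp h1).2
    nlinarith [dist_nonneg (x := z) (y := c)]
  have hSle : ∀ i, ∀ y ∈ Y, |(fderivWithin ℝ (h i) Y y).det| ≤ Sf i := by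
    intro i y hy
    rw [hSf]
    refine aux_le_biSup (f := fun z => |(fderivWithin ℝ (h i) Y z).det|)
      (K := Real.exp (Real.log |(fderivWithin ℝ (h i) Y c).det| + C₁)) ?_
      (Real.exp_pos _).le hy
    intro z hz
    rcases eq_or_lt_of_le (abs_nonneg (fderivWithin ℝ (h i) Y z).det) with h0 | h0
    · exact le_trans h0.symm.le (Real.exp_pos _).le
    · have hlog := hdet i z hz c hcY
      have hd : dist z c ^ α ≤ 1 := hdα1 z hz c hcY
      have h2 : Real.log |(fderivWithin ℝ (h i) Y z).det| ≤
          Real.log |(fderivWithin ℝ (h i) Y c).det| + C₁ := by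
        have h3 := (abs_le.mp hlog).2
        nlinarith
      calc |(fderivWithin ℝ (h i) Y z).det|
          = Real.exp (Real.log |(fderivWithin ℝ (h i) Y z).det|) := (Real.exp_log h0).symm
      _ ≤ _ := Real.exp_le_exp.mpr h2
  have hSnn : ∀ i, 0 ≤ Sf i := fun i => le_trans (abs_nonneg _) (hSle i c hcY)
  have hMnn : ∀ i, 0 ≤ Real.exp (ε₀ * Rf i) * Sf i :=
    fun i => mul_nonneg (Real.exp_pos _).le (hSnn i)
  -- positivity dichotomy for the Jacobians
  have hJpos : ∀ i, (∃ z ∈ Y, 0 < |(fderivWithin ℝ (h i) Y z).det|) →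
      ∀ w ∈ Y, 0 < |(fderivWithin ℝ (h i) Y w).det| := by
    intro i hex w hw
    have hcont : ContinuousOn (fun y => |(fderivWithin ℝ (h i) Y y).det|) Y :=
      (ContinuousLinearMap.continuous_det.comp_continuousOn
        ((hsmooth i).continuousOn_fderivWithin hud le_rfl)).abs
    by_contra hcon
    have hw0 : |(fderivWithin ℝ (h i) Y w).det| = 0 :=
      le_antisymm (not_lt.mp hcon) (abs_nonneg _)
    haveI : PreconnectedSpace Y := Subtype.preconnectedSpace hconv.isPreconnected
    set A : Set Y := {z : Y | |(fderivWithin ℝ (h i) Y (z : EuclideanSpace ℝ (Fin m))).det| = 0}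
      with hA
    have hAclosed : IsClosed A := isClosed_eq hcont.restrict continuous_const
    have hAopen : IsOpen A := by
      rw [Metric.isOpen_iff]
      rintro ⟨z, hzY⟩ hzA
      simp only [hA, Set.mem_setOf_eq] at hzA
      have hcz : ContinuousWithinAt (fun y => |(fderivWithin ℝ (h i) Y y).det|) Y z :=
        hcont z hzY
      rw [Metric.continuousWithinAt_iff] at hcz
      obtain ⟨δ, hδ0, hδ⟩ := hcz (Real.exp (-C₁)) (Real.exp_pos _)
      refine ⟨δ, hδ0, ?_⟩
      rintro ⟨x, hxY⟩ hxball
      rw [Metric.mem_ball, Subtype.dist_eq] at hxball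
      show |(fderivWithin ℝ (h i) Y x).det| = 0
      by_contra hx0
      have hxpos : 0 < |(fderivWithin ℝ (h i) Y x).det| :=
        lt_of_le_of_ne (abs_nonneg _) (Ne.symm hx0)
      have h1 := hdet i x hxY z hzY
      rw [hzA, Real.log_zero, sub_zero] at h1
      have hd : dist x z ^ α ≤ 1 := hdα1 x hxY z hzY
      have h2 : -C₁ ≤ Real.log |(fderivWithin ℝ (h i) Y x).det| := by
        have h3 := (abs_le.mp h1).1
        nlinarith
      have h3 : Real.exp (-C₁) ≤ |(fderivWithin ℝ (h i) Y x).det| := by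
        calc Real.exp (-C₁) ≤ Real.exp (Real.log |(fderivWithin ℝ (h i) Y x).det|) :=
              Real.exp_le_exp.mpr h2
        _ = _ := Real.exp_log hxpos
      have h4 := hδ hxY hxball
      rw [hzA, Real.dist_eq, sub_zero, abs_abs] at h4
      linarith
    obtain ⟨z₀, hz₀Y, hz₀⟩ := hex
    rcases isClopen_iff.mp ⟨hAclosed, hAopen⟩ with hemp | huniv
    · have hmem : (⟨w, hw⟩ : Y) ∈ A := hw0
      rw [hemp] at hmem
      exact hmem
    · have hmem : (⟨z₀, hz₀Y⟩ : Y) ∈ A := by rw [huniv]; trivial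
      simp only [hA, Set.mem_setOf_eq] at hmem
      exact absurd hmem (ne_of_gt hz₀)
  -- Hölder estimate for the Jacobians
  have hJdiff : ∀ i, ∀ x ∈ Y, ∀ y ∈ Y,
      abs (|(fderivWithin ℝ (h i) Y x).det| - |(fderivWithin ℝ (h i) Y y).det|)
        ≤ C₁ * Real.exp C₁ * Sf i * dist x y ^ α := by
    intro i x hx y hy
    have hDnn : (0:ℝ) ≤ dist x y ^ α := Real.rpow_nonneg dist_nonneg α
    by_cases hex : ∃ z ∈ Y, 0 < |(fderivWithin ℝ (h i) Y z).det|
    · have hpx : 0 < |(fderivWithin ℝ (h i) Y x).det| := hJpos i hex x hx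
      have hpy : 0 < |(fderivWithin ℝ (h i) Y y).det| := hJpos i hex y hy
      set a := |(fderivWithin ℝ (h i) Y x).det| with ha
      set b := |(fderivWithin ℝ (h i) Y y).det| with hb
      have hΔ : |Real.log a - Real.log b| ≤ C₁ * dist x y ^ α := hdet i x hx y hy
      have e1 : b * Real.exp (Real.log a - Real.log b) = a := by
        have e2 := Real.exp_add (Real.log b) (Real.log a - Real.log b)
        have e3 : Real.log b + (Real.log a - Real.log b) = Real.log a := by ring
        rw [e3, Real.exp_log hpx, Real.exp_log hpy] at e2
        linarith
      have key : |a - b| = b * |Real.exp (Real.log a - Real.log b) - 1| := by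
        rw [← abs_of_pos hpy, ← abs_mul, mul_sub, mul_one, abs_of_pos hpy, e1]
      have h2 := aux_abs_exp_sub_one (Real.log a - Real.log b)
      have hΔ1 : |Real.log a - Real.log b| ≤ C₁ := by
        have := hdα1 x hx y hy
        nlinarith
      have h3 : |Real.exp (Real.log a - Real.log b) - 1|
          ≤ (C₁ * dist x y ^ α) * Real.exp C₁ := by
        calc |Real.exp (Real.log a - Real.log b) - 1|
            ≤ |Real.log a - Real.log b| * Real.exp |Real.log a - Real.log b| := h2
        _ ≤ (C₁ * dist x y ^ α) * Real.exp C₁ :=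
            mul_le_mul hΔ (Real.exp_le_exp.mpr hΔ1) (Real.exp_pos _).le (by nlinarith)
      have hbS : b ≤ Sf i := hSle i y hy
      calc |a - b| = b * |Real.exp (Real.log a - Real.log b) - 1| := key
      _ ≤ Sf i * ((C₁ * dist x y ^ α) * Real.exp C₁) :=
          mul_le_mul hbS h3 (abs_nonneg _) (hSnn i)
      _ = C₁ * Real.exp C₁ * Sf i * dist x y ^ α := by ring
    · push_neg at hex
      have hx0 : |(fderivWithin ℝ (h i) Y x).det| = 0 :=
        le_antisymm (hex x hx) (abs_nonneg _)
      have hy0 : |(fderivWithin ℝ (h i) Y y).det| = 0 :=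
        le_antisymm (hex y hy) (abs_nonneg _)
      rw [hx0, hy0, sub_zero, abs_zero]
      exact mul_nonneg (mul_nonneg (mul_nonneg (by linarith : (0:ℝ) ≤ C₁)
        (Real.exp_pos C₁).le) (hSnn i)) hDnn
  -- the constant
  set K : ℝ := C₁ + C₁ * Real.exp C₁ + (3 + Real.exp (ε₀ * C₁)) * C₁ * (1 + ε₀) with hK
  have hK1 : 1 ≤ K := by
    have p1 : 0 ≤ C₁ * Real.exp C₁ := mul_nonneg (by linarith) (Real.exp_pos C₁).le
    have p2 : 0 ≤ (3 + Real.exp (ε₀ * C₁)) * C₁ * (1 + ε₀) :=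
      mul_nonneg (mul_nonneg (by linarith [Real.exp_pos (ε₀ * C₁)]) (by linarith))
        (by linarith)
    rw [hK]; linarith
  set T : ℝ := ∑' i, Real.exp (ε₀ * Rf i) * Sf i with hT
  have hT0 : 0 ≤ T := tsum_nonneg hMnn
  have hCpos : (0:ℝ) < (T + 1) * K := by
    nlinarith [mul_le_mul_of_nonneg_left hK1 (by linarith : (0:ℝ) ≤ T + 1)]
  refine ⟨ε₀, ⟨hε₀, le_refl ε₀⟩, (T + 1) * K, hCpos, ?_⟩
  intro s hs v Vinf Vα hvI hvA
  set B : ℝ := |s.im| ^ α with hB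
  have hB0 : (0:ℝ) ≤ B := Real.rpow_nonneg (abs_nonneg _) α
  have h1B : (0:ℝ) < 1 + B := by linarith
  set Mx : ℝ := max Vinf (Vα / (1 + B)) with hMx
  have hVinf0 : 0 ≤ Vinf := le_trans (norm_nonneg _) (hvI c hcY)
  have hVinfMx : Vinf ≤ Mx := le_max_left _ _
  have hMx0 : 0 ≤ Mx := le_trans hVinf0 hVinfMx
  have hVαMx : Vα ≤ Mx * (1 + B) := by
    have h1 : Vα / (1 + B) ≤ Mx := le_max_right _ _
    have h2 : Vα / (1 + B) * (1 + B) = Vα := by field_simp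
    nlinarith
  have hVα0 : 0 ≤ Vα := by
    by_contra hneg
    push_neg at hneg
    set c' : EuclideanSpace ℝ (Fin m) :=
      c + (4⁻¹ : ℝ) • EuclideanSpace.single (⟨0, hm⟩ : Fin m) (1:ℝ) with hc'
    have hdist : dist c' c = 4⁻¹ := by
      rw [dist_eq_norm, hc', add_sub_cancel_left, norm_smul, EuclideanSpace.norm_single]
      norm_num
    have hc'Y : c' ∈ Y := by
      rw [hY, Metric.mem_ball, hdist]; norm_num
    have h1 := hvA c' hc'Y c hcY
    rw [hdist] at h1
    have hp : (0:ℝ) < (4⁻¹:ℝ) ^ α := Real.rpow_pos_of_pos (by norm_num) α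
    have h2 : Vα * (4⁻¹:ℝ) ^ α < 0 := mul_neg_of_neg_of_pos hneg hp
    exact absurd (le_trans (norm_nonneg _) h1) (not_le.mpr h2)
  -- bound for the exponential factor
  have hEb : ∀ i, ∀ y ∈ Y, ‖Complex.exp (-s * (r i y : ℂ))‖
      ≤ Real.exp (ε₀ * Rf i) := by
    intro i y hy
    rw [Complex.norm_exp]
    apply Real.exp_le_exp.mpr
    have hre : (-s * ((r i y : ℝ) : ℂ)).re = -s.re * r i y := by
      simp [Complex.mul_re]
    rw [hre]
    have h1 : (0:ℝ) < r i y := lt_of_lt_of_le hr₀ (hrlb i y hy)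
    have h2 : -s.re ≤ ε₀ := le_trans (neg_le_abs _) hs
    have h3 : r i y ≤ Rf i := hRle i y hy
    calc -s.re * r i y ≤ ε₀ * r i y := mul_le_mul_of_nonneg_right h2 h1.le
    _ ≤ ε₀ * Rf i := mul_le_mul_of_nonneg_left h3 hε₀.le
  -- pointwise bound for each term
  have hterm : ∀ i, ∀ y ∈ Y, ‖Complex.exp (-s * (r i y : ℂ)) *
      ((|(fderivWithin ℝ (h i) Y y).det| : ℝ) : ℂ) * v (h i y)‖
      ≤ Real.exp (ε₀ * Rf i) * Sf i * Vinf := by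
    intro i y hy
    rw [norm_mul, norm_mul, Complex.norm_real, Real.norm_eq_abs, abs_abs]
    exact mul_le_mul
      (mul_le_mul (hEb i y hy) (hSle i y hy) (abs_nonneg _) (Real.exp_pos _).le)
      (hvI _ (hmaps i hy)) (norm_nonneg _)
      (mul_nonneg (Real.exp_pos _).le (hSnn i))
  have hsumpt : ∀ y ∈ Y, Summable fun i =>
      ‖Complex.exp (-s * (r i y : ℂ)) *
        ((|(fderivWithin ℝ (h i) Y y).det| : ℝ) : ℂ) * v (h i y)‖ := by
    intro y hy
    exact Summable.of_nonneg_of_le (fun i => norm_nonneg _)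
      (fun i => hterm i y hy) (hMsum.mul_right Vinf)
  have habs_sub : ∀ u w : ℂ, ‖u - w‖ ≤ ‖u‖ + ‖w‖ :=
    fun u w => norm_sub_le u w
  refine ⟨hsumpt, ?_, ?_, ?_⟩
  · -- uniform convergence
    unfold transferOp
    apply tendstoUniformlyOn_tsum (hMsum.mul_right Vinf)
    intro i y hy
    exact hterm i y hy
  · -- sup bound
    intro y hy
    have h1 : ‖transferOp Y h r s v y‖ ≤ ∑' i,
        ‖Complex.exp (-s * (r i y : ℂ)) *
          ((|(fderivWithin ℝ (h i) Y y).det| : ℝ) : ℂ) * v (h i y)‖ := by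
      unfold transferOp
      refine norm_tsum_le_tsum_norm (f := fun i => Complex.exp (-s * (r i y : ℂ)) *
        ((|(fderivWithin ℝ (h i) Y y).det| : ℝ) : ℂ) * v (h i y)) ?_
      exact hsumpt y hy
    have h2 : (∑' i, ‖Complex.exp (-s * (r i y : ℂ)) *
        ((|(fderivWithin ℝ (h i) Y y).det| : ℝ) : ℂ) * v (h i y)‖)
        ≤ ∑' i, Real.exp (ε₀ * Rf i) * Sf i * Vinf :=
      Summable.tsum_le_tsum (fun i => hterm i y hy) (hsumpt y hy) (hMsum.mul_right Vinf)
    have h3 : (∑' i, Real.exp (ε₀ * Rf i) * Sf i * Vinf) = T * Vinf := tsum_mul_right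
    have h4 : T * Vinf ≤ (T + 1) * K * Mx := by
      have g1 : T * Vinf ≤ T * Mx := mul_le_mul_of_nonneg_left hVinfMx hT0
      have g2 : T * Mx ≤ (T + 1) * K * Mx := by
        apply mul_le_mul_of_nonneg_right _ hMx0
        nlinarith [mul_le_mul_of_nonneg_left hK1 (by linarith : (0:ℝ) ≤ T + 1)]
      linarith
    linarith
  · -- Hölder bound
    intro x hx y hy
    set D : ℝ := dist x y ^ α with hD
    have hD0 : 0 ≤ D := Real.rpow_nonneg dist_nonneg α
    have hD1 : D ≤ 1 := hdα1 x hx y hy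
    -- per-term difference estimate
    have hdterm : ∀ i, ‖        (Complex.exp (-s * (r i x : ℂ)) *
          ((|(fderivWithin ℝ (h i) Y x).det| : ℝ) : ℂ) * v (h i x)) -
         (Complex.exp (-s * (r i y : ℂ)) *
          ((|(fderivWithin ℝ (h i) Y y).det| : ℝ) : ℂ) * v (h i y))‖
        ≤ Real.exp (ε₀ * Rf i) * Sf i * (K * (Mx * ((1 + B) * D))) := by
      intro i
      have hhx : h i x ∈ Y := hmaps i hx
      have hhy : h i y ∈ Y := hmaps i hy
      set Ex := Complex.exp (-s * (r i x : ℂ)) with hEx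
      set Ey := Complex.exp (-s * (r i y : ℂ)) with hEy
      set Jx : ℝ := |(fderivWithin ℝ (h i) Y x).det| with hJx
      set Jy : ℝ := |(fderivWithin ℝ (h i) Y y).det| with hJy
      set vx := v (h i x) with hvx
      set vy := v (h i y) with hvy
      have hJxnn : (0:ℝ) ≤ Jx := abs_nonneg _
      have hJynn : (0:ℝ) ≤ Jy := abs_nonneg _
      have hsplit : Ex * (Jx:ℂ) * vx - Ey * (Jy:ℂ) * vy
          = Ex * (Jx:ℂ) * (vx - vy) + Ex * ((Jx:ℂ) - (Jy:ℂ)) * vy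
            + (Ex - Ey) * (Jy:ℂ) * vy := by ring
      rw [hsplit]
      have htri : ‖Ex * (Jx:ℂ) * (vx - vy) + Ex * ((Jx:ℂ) - (Jy:ℂ)) * vy
            + (Ex - Ey) * (Jy:ℂ) * vy‖
          ≤ ‖Ex * (Jx:ℂ) * (vx - vy)‖ +
            ‖Ex * ((Jx:ℂ) - (Jy:ℂ)) * vy‖ +
            ‖(Ex - Ey) * (Jy:ℂ) * vy‖ :=
        le_trans (norm_add_le _ _)
          (add_le_add_left (norm_add_le _ _) _)
      have hExb : ‖Ex‖ ≤ Real.exp (ε₀ * Rf i) := hEb i x hx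
      have hEyb : ‖Ey‖ ≤ Real.exp (ε₀ * Rf i) := hEb i y hy
      have hJxS : Jx ≤ Sf i := hSle i x hx
      have hJyS : Jy ≤ Sf i := hSle i y hy
      have hvyb : ‖vy‖ ≤ Vinf := hvI _ hhy
      have hC₁α : C₁ ^ α ≤ C₁ := by
        have := Real.rpow_le_rpow_of_exponent_le hC₁ hα1
        rwa [Real.rpow_one] at this
      -- first term
      have hb1 : ‖Ex * (Jx:ℂ) * (vx - vy)‖
          ≤ Real.exp (ε₀ * Rf i) * Sf i * (C₁ * (Mx * ((1 + B) * D))) := by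
        rw [norm_mul, norm_mul, Complex.norm_real, Real.norm_eq_abs, abs_of_nonneg hJxnn]
        have hv3 : ‖vx - vy‖ ≤ C₁ * (Mx * ((1 + B) * D)) := by
          have h1 := hvA _ hhx _ hhy
          have h2 : dist (h i x) (h i y) ^ α ≤ C₁ * D := by
            calc dist (h i x) (h i y) ^ α ≤ (C₁ * dist x y) ^ α :=
                  Real.rpow_le_rpow dist_nonneg (hhd i x hx y hy) hα0.le
            _ = C₁ ^ α * D := Real.mul_rpow (by linarith) dist_nonneg
            _ ≤ C₁ * D := mul_le_mul_of_nonneg_right hC₁α hD0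
          calc ‖vx - vy‖ ≤ Vα * dist (h i x) (h i y) ^ α := h1
          _ ≤ Vα * (C₁ * D) := mul_le_mul_of_nonneg_left h2 hVα0
          _ ≤ Mx * (1 + B) * (C₁ * D) := mul_le_mul_of_nonneg_right hVαMx (by positivity)
          _ = C₁ * (Mx * ((1 + B) * D)) := by ring
        exact mul_le_mul
          (mul_le_mul hExb hJxS hJxnn (Real.exp_pos _).le) hv3 (norm_nonneg _)
          (mul_nonneg (Real.exp_pos _).le (hSnn i))
      -- second term
      have hb2 : ‖Ex * ((Jx:ℂ) - (Jy:ℂ)) * vy‖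
          ≤ Real.exp (ε₀ * Rf i) * Sf i * ((C₁ * Real.exp C₁) * (Mx * ((1 + B) * D))) := by
        have hcast : ((Jx:ℂ) - (Jy:ℂ)) = ((Jx - Jy : ℝ) : ℂ) := by push_cast; ring
        rw [norm_mul, norm_mul, hcast, Complex.norm_real, Real.norm_eq_abs]
        have hJd : |Jx - Jy| ≤ C₁ * Real.exp C₁ * Sf i * D := hJdiff i x hx y hy
        have hVM : Vinf ≤ Mx * (1 + B) := by nlinarith
        calc ‖Ex‖ * |Jx - Jy| * ‖vy‖
            ≤ Real.exp (ε₀ * Rf i) * (C₁ * Real.exp C₁ * Sf i * D) * (Mx * (1 + B)) := by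
              apply mul_le_mul _ (le_trans hvyb hVM) (norm_nonneg _)
                (mul_nonneg (Real.exp_pos _).le
                  (mul_nonneg (mul_nonneg (mul_nonneg (by linarith : (0:ℝ) ≤ C₁)
                    (Real.exp_pos C₁).le) (hSnn i)) hD0))
              exact mul_le_mul hExb hJd (abs_nonneg _) (Real.exp_pos _).le
        _ = Real.exp (ε₀ * Rf i) * Sf i * ((C₁ * Real.exp C₁) * (Mx * ((1 + B) * D))) := by
              ring
      -- third term
      have hb3 : ‖(Ex - Ey) * (Jy:ℂ) * vy‖
          ≤ Real.exp (ε₀ * Rf i) * Sf i *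
            (((3 + Real.exp (ε₀ * C₁)) * C₁ * (1 + ε₀)) * (Mx * ((1 + B) * D))) := by
        set z : ℂ := -s * (((r i x : ℝ) : ℂ) - ((r i y : ℝ) : ℂ)) with hz
        have hEsplit : Ex - Ey = Ey * (Complex.exp z - 1) := by
          rw [hEx, hEy, hz, mul_sub, mul_one, ← Complex.exp_add]
          congr 2
          ring
        have hzre : |z.re| ≤ ε₀ * C₁ := by
          have h1 : z.re = -s.re * (r i x - r i y) := by
            rw [hz]; simp [Complex.mul_re, Complex.sub_re, Complex.sub_im]
          rw [h1, abs_mul, abs_neg]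
          have h2 := hrdiff i x hx y hy
          have h3 : |s.re| ≤ ε₀ := hs
          have h4 := hd1 x hx y hy
          have h5 : C₁ * dist x y ≤ C₁ := by nlinarith [dist_nonneg (x := x) (y := y)]
          nlinarith [abs_nonneg s.re, abs_nonneg (r i x - r i y)]
        have hexp := aux_cexp_sub_one hα0 hα1
          (mul_nonneg hε₀.le (by linarith : (0:ℝ) ≤ C₁)) hzre
        have hzabs : ‖z‖ ^ α ≤ (1 + ε₀) * (1 + B) * (C₁ * D) := by
          have h1 : ‖z‖ ≤ ‖s‖ * (C₁ * dist x y) := by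
            rw [hz, norm_mul, norm_neg]
            apply mul_le_mul_of_nonneg_left _ (norm_nonneg s)
            have hcast : (((r i x : ℝ) : ℂ) - ((r i y : ℝ) : ℂ))
                = ((r i x - r i y : ℝ) : ℂ) := by push_cast; ring
            rw [hcast, Complex.norm_real, Real.norm_eq_abs]
            exact hrdiff i x hx y hy
          have h2 : ‖z‖ ^ α ≤ (‖s‖ * (C₁ * dist x y)) ^ α :=
            Real.rpow_le_rpow (norm_nonneg z) h1 hα0.le
          have h3 : (‖s‖ * (C₁ * dist x y)) ^ α
              = ‖s‖ ^ α * ((C₁ * dist x y) ^ α) :=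
            Real.mul_rpow (norm_nonneg s) (by positivity)
          have h4 : (C₁ * dist x y) ^ α ≤ C₁ * D := by
            calc (C₁ * dist x y) ^ α = C₁ ^ α * D := Real.mul_rpow (by linarith) dist_nonneg
            _ ≤ C₁ * D := mul_le_mul_of_nonneg_right hC₁α hD0
          have h5 : ‖s‖ ^ α ≤ (1 + ε₀) * (1 + B) := by
            have g1 : ‖s‖ ≤ ε₀ + |s.im| := by
              have := Complex.norm_le_abs_re_add_abs_im s
              have g2 : |s.re| ≤ ε₀ := hs
              linarith
            have g3 : ‖s‖ ^ α ≤ (ε₀ + |s.im|) ^ α :=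
              Real.rpow_le_rpow (norm_nonneg s) g1 hα0.le
            have g4 : (ε₀ + |s.im|) ^ α ≤ ε₀ ^ α + B :=
              aux_rpow_add hε₀.le (abs_nonneg _) hα0.le hα1
            have g5 : ε₀ ^ α ≤ 1 + ε₀ := aux_rpow_le_one_add hε₀.le hα0.le hα1
            nlinarith
          have h6 : (0:ℝ) ≤ ‖s‖ ^ α := Real.rpow_nonneg (norm_nonneg _) α
          calc ‖z‖ ^ α ≤ ‖s‖ ^ α * ((C₁ * dist x y) ^ α) := by
                rw [← h3]; exact h2
          _ ≤ (1 + ε₀) * (1 + B) * (C₁ * D) := by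
                apply mul_le_mul h5 h4 (by positivity) (by positivity)
        rw [hEsplit]
        rw [norm_mul, norm_mul, norm_mul, Complex.norm_real, Real.norm_eq_abs, abs_of_nonneg hJynn]
        have hfin : ‖Complex.exp z - 1‖
            ≤ (3 + Real.exp (ε₀ * C₁)) * ((1 + ε₀) * (1 + B) * (C₁ * D)) := by
          calc ‖Complex.exp z - 1‖
              ≤ (3 + Real.exp (ε₀ * C₁)) * ‖z‖ ^ α := hexp
          _ ≤ (3 + Real.exp (ε₀ * C₁)) * ((1 + ε₀) * (1 + B) * (C₁ * D)) := by
              apply mul_le_mul_of_nonneg_left hzabs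
              positivity
        have hq3 : (0:ℝ) ≤ 3 + Real.exp (ε₀ * C₁) := by linarith [Real.exp_pos (ε₀ * C₁)]
        have hq : (0:ℝ) ≤ (1 + ε₀) * (1 + B) * (C₁ * D) :=
          mul_nonneg (mul_nonneg (by linarith) (by linarith))
            (mul_nonneg (by linarith) hD0)
        have hnn1 : (0:ℝ) ≤ Real.exp (ε₀ * Rf i) *
            ((3 + Real.exp (ε₀ * C₁)) * ((1 + ε₀) * (1 + B) * (C₁ * D))) :=
          mul_nonneg (Real.exp_pos _).le (mul_nonneg hq3 hq)
        calc ‖Ey‖ * ‖Complex.exp z - 1‖ * Jy * ‖vy‖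
            ≤ Real.exp (ε₀ * Rf i) *
              ((3 + Real.exp (ε₀ * C₁)) * ((1 + ε₀) * (1 + B) * (C₁ * D))) * Sf i *
              Mx := by
              apply mul_le_mul _ (le_trans hvyb hVinfMx) (norm_nonneg _)
                (mul_nonneg hnn1 (hSnn i))
              apply mul_le_mul _ hJyS hJynn hnn1
              exact mul_le_mul hEyb hfin (norm_nonneg _) (Real.exp_pos _).le
        _ = Real.exp (ε₀ * Rf i) * Sf i *
              (((3 + Real.exp (ε₀ * C₁)) * C₁ * (1 + ε₀)) * (Mx * ((1 + B) * D))) := by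
              ring
      have hsum3 : Real.exp (ε₀ * Rf i) * Sf i * (C₁ * (Mx * ((1 + B) * D)))
          + Real.exp (ε₀ * Rf i) * Sf i * ((C₁ * Real.exp C₁) * (Mx * ((1 + B) * D)))
          + Real.exp (ε₀ * Rf i) * Sf i *
            (((3 + Real.exp (ε₀ * C₁)) * C₁ * (1 + ε₀)) * (Mx * ((1 + B) * D)))
          = Real.exp (ε₀ * Rf i) * Sf i * (K * (Mx * ((1 + B) * D))) := by
        rw [hK]; ring
      linarith [htri, hb1, hb2, hb3]
    -- sum up
    have hsx : Summable fun i => Complex.exp (-s * (r i x : ℂ)) *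
        ((|(fderivWithin ℝ (h i) Y x).det| : ℝ) : ℂ) * v (h i x) := by
      apply Summable.of_norm
      exact hsumpt x hx
    have hsy : Summable fun i => Complex.exp (-s * (r i y : ℂ)) *
        ((|(fderivWithin ℝ (h i) Y y).det| : ℝ) : ℂ) * v (h i y) := by
      apply Summable.of_norm
      exact hsumpt y hy
    have hdiffeq : transferOp Y h r s v x - transferOp Y h r s v y
        = ∑' i, ((Complex.exp (-s * (r i x : ℂ)) *
            ((|(fderivWithin ℝ (h i) Y x).det| : ℝ) : ℂ) * v (h i x)) -
          (Complex.exp (-s * (r i y : ℂ)) *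
            ((|(fderivWithin ℝ (h i) Y y).det| : ℝ) : ℂ) * v (h i y))) := by
      unfold transferOp
      exact (Summable.tsum_sub hsx hsy).symm
    have hS3 : Summable fun i => ‖        (Complex.exp (-s * (r i x : ℂ)) *
          ((|(fderivWithin ℝ (h i) Y x).det| : ℝ) : ℂ) * v (h i x)) -
         (Complex.exp (-s * (r i y : ℂ)) *
          ((|(fderivWithin ℝ (h i) Y y).det| : ℝ) : ℂ) * v (h i y))‖ := by
      apply Summable.of_nonneg_of_le (fun i => norm_nonneg _)
        (fun i => habs_sub _ _) ((hsumpt x hx).add (hsumpt y hy))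
    have h1 : ‖transferOp Y h r s v x - transferOp Y h r s v y‖
        ≤ ∑' i, ‖        (Complex.exp (-s * (r i x : ℂ)) *
          ((|(fderivWithin ℝ (h i) Y x).det| : ℝ) : ℂ) * v (h i x)) -
         (Complex.exp (-s * (r i y : ℂ)) *
          ((|(fderivWithin ℝ (h i) Y y).det| : ℝ) : ℂ) * v (h i y))‖ := by
      rw [hdiffeq]
      refine norm_tsum_le_tsum_norm (f := fun i =>
        (Complex.exp (-s * (r i x : ℂ)) *
          ((|(fderivWithin ℝ (h i) Y x).det| : ℝ) : ℂ) * v (h i x)) -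
        (Complex.exp (-s * (r i y : ℂ)) *
          ((|(fderivWithin ℝ (h i) Y y).det| : ℝ) : ℂ) * v (h i y))) ?_
      exact hS3
    have h2 : (∑' i, ‖        (Complex.exp (-s * (r i x : ℂ)) *
          ((|(fderivWithin ℝ (h i) Y x).det| : ℝ) : ℂ) * v (h i x)) -
         (Complex.exp (-s * (r i y : ℂ)) *
          ((|(fderivWithin ℝ (h i) Y y).det| : ℝ) : ℂ) * v (h i y))‖)
        ≤ ∑' i, Real.exp (ε₀ * Rf i) * Sf i * (K * (Mx * ((1 + B) * D))) :=
      Summable.tsum_le_tsum hdterm hS3 (hMsum.mul_right _)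
    have h3 : (∑' i, Real.exp (ε₀ * Rf i) * Sf i * (K * (Mx * ((1 + B) * D))))
        = T * (K * (Mx * ((1 + B) * D))) := tsum_mul_right
    have hXnn : (0:ℝ) ≤ Mx * ((1 + B) * D) := by positivity
    have h4 : T * (K * (Mx * ((1 + B) * D))) ≤ (T + 1) * K * Mx * (1 + B) * D := by
      nlinarith [mul_nonneg hMx0 (mul_nonneg (le_of_lt h1B) hD0)]
    linarith
end
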